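/- arXiv:1804.09062 — 9 statements merged into one kernel-verified Lean document; each statement's English description precedes it below -/
import Mathlib

section
/- (Birch's theorem, E-projection characterization.) Let V ⊆ ℝ^n be an affine subspace, V^⊥ := {w ∈ ℝ^n : v·w = 0 for all v ∈ V}, e^V := {(e^{v_1},…,e^{v_n}) : v ∈ V}, let α ∈ ℝ^n have strictly positive entries, and let α* be the unique point of (α + V^⊥) ∩ ℝ^n_{≥0} ∩ e^V. Then for every β ∈ e^V, α* is the unique minimizer of x ↦ D(x‖β) over the set (α + V^⊥) ∩ ℝ^n_{≥0}. -/
/-- Extended relative entropy `D(x‖y)` (real-valued form, valid when `y` has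
positive entries and `x` has nonnegative entries). -/
noncomputable def KL {ι : Type*} [Fintype ι] (x y : ι → ℝ) : ℝ :=
  ∑ i, (x i * Real.log (x i / y i) - x i + y i)

/-- Each term of KL is nonnegative. -/
lemma kl_term_nonneg (x y : ℝ) (hx : 0 ≤ x) (hy : 0 < y) :
    0 ≤ x * Real.log (x / y) - x + y := by
  rcases eq_or_lt_of_le hx with h | h
  · simp [← h]; linarith
  · have hlog : Real.log (y / x) ≤ y / x - 1 := Real.log_le_sub_one_of_pos (by positivity)
    have hinv : Real.log (y / x) = - Real.log (x / y) := by
      rw [← Real.log_inv]; congr 1; field_simp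
    have h2 := mul_le_mul_of_nonneg_left hlog h.le
    have h3 : x * (y / x - 1) = y - x := by field_simp
    rw [hinv] at h2
    nlinarith

/-- A KL term is zero only when `x = y`. -/
lemma kl_term_eq_zero (x y : ℝ) (hx : 0 ≤ x) (hy : 0 < y)
    (h : x * Real.log (x / y) - x + y = 0) : x = y := by
  rcases eq_or_lt_of_le hx with h0 | h0
  · exfalso; rw [← h0] at h; simp at h; linarith
  · by_contra hne
    have hratio : y / x ≠ 1 := by
      intro hr
      apply hne
      field_simp at hr
      linarith
    have hlog : Real.log (y / x) < y / x - 1 :=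
      Real.log_lt_sub_one_of_pos (by positivity) hratio
    have hinv : Real.log (y / x) = - Real.log (x / y) := by
      rw [← Real.log_inv]; congr 1; field_simp
    have h2 := mul_lt_mul_of_pos_left hlog h0
    have h3 : x * (y / x - 1) = y - x := by field_simp
    rw [hinv] at h2
    nlinarith

/-- Pointwise Pythagorean identity for KL terms. -/
lemma kl_term_pythagoras (z a b : ℝ) (hz : 0 ≤ z) (ha : 0 < a) (hb : 0 < b) :
    z * Real.log (z / b) - z + b =
      (z * Real.log (z / a) - z + a) + (a * Real.log (a / b) - a + b)
        + (z - a) * (Real.log a - Real.log b) := by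
  have hab : Real.log (a / b) = Real.log a - Real.log b :=
    Real.log_div ha.ne' hb.ne'
  rcases eq_or_lt_of_le hz with h0 | h0
  · rw [← h0, hab]; ring_nf
  · rw [Real.log_div h0.ne' hb.ne', Real.log_div h0.ne' ha.ne', hab]
    ring

/-- Birch's theorem, E-projection characterization: with `α*` the
unique point of `(α + V^⊥) ∩ ℝ^n_{≥0} ∩ e^V`, for every `β ∈ e^V`, `α*` is the
unique minimizer of `x ↦ D(x‖β)` over `(α + V^⊥) ∩ ℝ^n_{≥0}`. -/
theorem birch_eprojection
    (n : ℕ) (V : Set (Fin n → ℝ))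
    (hV : ∃ (p : Fin n → ℝ) (W : Submodule ℝ (Fin n → ℝ)), V = {x | x - p ∈ W})
    (α : Fin n → ℝ) (hα : ∀ i, 0 < α i)
    (αstar : Fin n → ℝ)
    (hstar :
      ((∃ w : Fin n → ℝ, (∀ v ∈ V, ∑ i, v i * w i = 0) ∧ αstar = α + w) ∧
        (∀ i, 0 ≤ αstar i)) ∧
      (∃ v ∈ V, αstar = fun i => Real.exp (v i)))
    (huniq : ∀ z : Fin n → ℝ,
      (((∃ w : Fin n → ℝ, (∀ v ∈ V, ∑ i, v i * w i = 0) ∧ z = α + w) ∧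
        (∀ i, 0 ≤ z i)) ∧
      (∃ v ∈ V, z = fun i => Real.exp (v i))) → z = αstar)
    (β : Fin n → ℝ) (hβ : ∃ v ∈ V, β = fun i => Real.exp (v i)) :
    (∀ z : Fin n → ℝ,
        ((∃ w : Fin n → ℝ, (∀ v ∈ V, ∑ i, v i * w i = 0) ∧ z = α + w) ∧
          (∀ i, 0 ≤ z i)) →
        KL αstar β ≤ KL z β) ∧
    (∀ z : Fin n → ℝ,
        ((∃ w : Fin n → ℝ, (∀ v ∈ V, ∑ i, v i * w i = 0) ∧ z = α + w) ∧
          (∀ i, 0 ≤ z i)) →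
        KL z β = KL αstar β → z = αstar) := by
  obtain ⟨⟨ws, hws, hαw⟩, hαnn⟩ := hstar.1
  obtain ⟨vs, hvs, hαs⟩ := hstar.2
  obtain ⟨vb, hvb, hβe⟩ := hβ
  have hαpos : ∀ i, 0 < αstar i := fun i => by rw [hαs]; exact Real.exp_pos _
  have hβpos : ∀ i, 0 < β i := fun i => by rw [hβe]; exact Real.exp_pos _
  have hlogαs : ∀ i, Real.log (αstar i) = vs i := fun i => by
    rw [hαs]; exact Real.log_exp _
  have hlogβ : ∀ i, Real.log (β i) = vb i := fun i => by
    rw [hβe]; exact Real.log_exp _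
  -- Key identity: for z in the fiber with nonneg entries, KL z β = KL z αstar + KL αstar β
  have key : ∀ z : Fin n → ℝ,
      ((∃ w : Fin n → ℝ, (∀ v ∈ V, ∑ i, v i * w i = 0) ∧ z = α + w) ∧
        (∀ i, 0 ≤ z i)) →
      KL z β = KL z αstar + KL αstar β := by
    intro z ⟨⟨wz, hwz, hzw⟩, hznn⟩
    have horth : ∑ i, (z i - αstar i) * (Real.log (αstar i) - Real.log (β i)) = 0 := by
      have hterm : ∀ i, (z i - αstar i) * (Real.log (αstar i) - Real.log (β i)) =
          vs i * wz i - vb i * wz i - vs i * ws i + vb i * ws i := by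
        intro i
        rw [hlogαs, hlogβ, hzw, hαw]
        simp only [Pi.add_apply]
        ring
      rw [Finset.sum_congr rfl (fun i _ => hterm i)]
      have h1 := hws vs hvs
      have h2 := hws vb hvb
      have h3 := hwz vs hvs
      have h4 := hwz vb hvb
      simp only [Finset.sum_add_distrib, Finset.sum_sub_distrib, h1, h2, h3, h4]
      ring
    have hsum : ∀ i, z i * Real.log (z i / β i) - z i + β i =
        (z i * Real.log (z i / αstar i) - z i + αstar i)
          + (αstar i * Real.log (αstar i / β i) - αstar i + β i)
          + (z i - αstar i) * (Real.log (αstar i) - Real.log (β i)) :=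
      fun i => kl_term_pythagoras _ _ _ (hznn i) (hαpos i) (hβpos i)
    unfold KL
    rw [Finset.sum_congr rfl (fun i _ => hsum i)]
    rw [Finset.sum_add_distrib, Finset.sum_add_distrib, horth, add_zero]
  have hKLnn : ∀ z : Fin n → ℝ, (∀ i, 0 ≤ z i) → 0 ≤ KL z αstar := by
    intro z hznn
    exact Finset.sum_nonneg fun i _ => kl_term_nonneg _ _ (hznn i) (hαpos i)
  constructor
  · intro z hz
    have h := key z hz
    have h0 := hKLnn z hz.2
    linarith
  · intro z hz heq
    have h := key z hz
    have hzero : KL z αstar = 0 := by linarith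
    have hall : ∀ i ∈ Finset.univ,
        z i * Real.log (z i / αstar i) - z i + αstar i = 0 := by
      rw [← Finset.sum_eq_zero_iff_of_nonneg
        (fun i _ => kl_term_nonneg _ _ (hz.2 i) (hαpos i))]
      exact hzero
    funext i
    exact kl_term_eq_zero _ _ (hz.2 i) (hαpos i) (hall i (Finset.mem_univ i))
end

section
/- (Birch's theorem, M-projection characterization.) Let V ⊆ ℝ^n be an affine subspace, V^⊥ := {w ∈ ℝ^n : v·w = 0 for all v ∈ V}, e^V := {(e^{v_1},…,e^{v_n}) : v ∈ V}, let α ∈ ℝ^n have strictly positive entries, and let α* be the unique point of (α + V^⊥) ∩ ℝ^n_{≥0} ∩ e^V. Then α* is the unique minimizer of y ↦ D(α‖y) over e^V; moreover D(α‖α*) + D(α*‖β) = D(α‖β) for every β ∈ e^V. -/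
lemma klterm_nonneg {a b : ℝ} (ha : 0 < a) (hb : 0 < b) :
    0 ≤ a * Real.log (a / b) - a + b := by
  have h := Real.log_le_sub_one_of_pos (show 0 < b / a by positivity)
  have hlog : Real.log (a / b) = - Real.log (b / a) := by
    rw [← Real.log_inv]; congr 1; field_simp
  have h2 : a * (b / a) = b := by field_simp
  nlinarith [mul_le_mul_of_nonneg_left h (le_of_lt ha)]

lemma klterm_pos {a b : ℝ} (ha : 0 < a) (hb : 0 < b) (hab : a ≠ b) :
    0 < a * Real.log (a / b) - a + b := by
  have hne : b / a ≠ 1 := by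
    intro h; apply hab; field_simp at h; linarith
  have h := Real.log_lt_sub_one_of_pos (show 0 < b / a by positivity) hne
  have hlog : Real.log (a / b) = - Real.log (b / a) := by
    rw [← Real.log_inv]; congr 1; field_simp
  have h2 : a * (b / a) = b := by field_simp
  nlinarith [mul_lt_mul_of_pos_left h ha]

/-- Birch's theorem, M-projection characterization: with `α*` the
unique point of `(α + V^⊥) ∩ ℝ^n_{≥0} ∩ e^V`, `α*` is the unique minimizer of
`y ↦ D(α‖y)` over `e^V`; moreover `D(α‖α*) + D(α*‖β) = D(α‖β)` for every
`β ∈ e^V`. -/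
theorem birch_mprojection
    (n : ℕ) (V : Set (Fin n → ℝ))
    (hV : ∃ (p : Fin n → ℝ) (W : Submodule ℝ (Fin n → ℝ)), V = {x | x - p ∈ W})
    (α : Fin n → ℝ) (hα : ∀ i, 0 < α i)
    (αstar : Fin n → ℝ)
    (hstar :
      ((∃ w : Fin n → ℝ, (∀ v ∈ V, ∑ i, v i * w i = 0) ∧ αstar = α + w) ∧
        (∀ i, 0 ≤ αstar i)) ∧
      (∃ v ∈ V, αstar = fun i => Real.exp (v i)))
    (huniq : ∀ z : Fin n → ℝ,
      (((∃ w : Fin n → ℝ, (∀ v ∈ V, ∑ i, v i * w i = 0) ∧ z = α + w) ∧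
        (∀ i, 0 ≤ z i)) ∧
      (∃ v ∈ V, z = fun i => Real.exp (v i))) → z = αstar) :
    (∀ β : Fin n → ℝ, (∃ v ∈ V, β = fun i => Real.exp (v i)) →
        KL α αstar ≤ KL α β) ∧
    (∀ β : Fin n → ℝ, (∃ v ∈ V, β = fun i => Real.exp (v i)) →
        KL α β = KL α αstar → β = αstar) ∧
    (∀ β : Fin n → ℝ, (∃ v ∈ V, β = fun i => Real.exp (v i)) →
        KL α αstar + KL αstar β = KL α β) := by
  obtain ⟨⟨⟨w, hw, hαw⟩, hnn⟩, v0, hv0, hαs⟩ := hstar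
  have hαspos : ∀ i, 0 < αstar i := by
    intro i; rw [hαs]; exact Real.exp_pos _
  -- Pythagorean identity
  have pyth : ∀ β : Fin n → ℝ, (∃ v ∈ V, β = fun i => Real.exp (v i)) →
      KL α αstar + KL αstar β = KL α β := by
    rintro β ⟨v, hv, rfl⟩
    have hw0 : ∑ i, v0 i * w i = 0 := hw v0 hv0
    have hw1 : ∑ i, v i * w i = 0 := hw v hv
    have key : KL α αstar + KL αstar (fun i => Real.exp (v i))
        - KL α (fun i => Real.exp (v i)) = ∑ i, w i * (v0 i - v i) := by
      unfold KL
      rw [← Finset.sum_add_distrib, ← Finset.sum_sub_distrib]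
      apply Finset.sum_congr rfl
      intro i _
      have l1 : Real.log (αstar i) = v0 i := by rw [hαs]; exact Real.log_exp _
      have h3 : αstar i = α i + w i := by rw [hαw]; rfl
      rw [Real.log_div (ne_of_gt (hα i)) (ne_of_gt (hαspos i)),
        Real.log_div (ne_of_gt (hαspos i)) (ne_of_gt (Real.exp_pos _)),
        Real.log_div (ne_of_gt (hα i)) (ne_of_gt (Real.exp_pos _)),
        l1, Real.log_exp, h3]
      ring
    have hz : ∑ i, w i * (v0 i - v i) = 0 := by
      have : ∑ i, w i * (v0 i - v i)
          = ∑ i, v0 i * w i - ∑ i, v i * w i := by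
        rw [← Finset.sum_sub_distrib]
        apply Finset.sum_congr rfl
        intro i _; ring
      rw [this, hw0, hw1]; ring
    linarith [key, hz]
  have hKLnn : ∀ β : Fin n → ℝ, (∀ i, 0 < β i) → 0 ≤ KL αstar β := by
    intro β hβ
    apply Finset.sum_nonneg
    intro i _
    exact klterm_nonneg (hαspos i) (hβ i)
  refine ⟨?_, ?_, pyth⟩
  · intro β hβ
    obtain ⟨v, hv, rfl⟩ := hβ
    have := pyth _ ⟨v, hv, rfl⟩
    have h0 := hKLnn _ (fun i => Real.exp_pos (v i))
    linarith
  · intro β hβ heq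
    obtain ⟨v, hv, rfl⟩ := hβ
    have hp := pyth _ ⟨v, hv, rfl⟩
    have h0 : KL αstar (fun i => Real.exp (v i)) = 0 := by linarith
    by_contra hne
    obtain ⟨i, hi⟩ := Function.ne_iff.mp hne
    have hpos : 0 < KL αstar (fun i => Real.exp (v i)) := by
      apply Finset.sum_pos'
      · intro j _; exact klterm_nonneg (hαspos j) (Real.exp_pos _)
      · exact ⟨i, Finset.mem_univ i, klterm_pos (hαspos i) (Real.exp_pos _)
          (fun h => hi (h.symm ▸ rfl))⟩
    linarith
end

section
/- Let (S, R, k) be a detailed balanced reaction system. Then for every x0 ∈ ℝ^S with strictly positive entries, there exists a unique point of detailed balance x* in the set (x0 + H_R) ∩ ℝ^S_{>0}, where H_R is the stoichiometric subspace. -/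
/-- `q` is a point of detailed balance for the reaction system `(S, R, k)`. -/
def IsDetailedBalancePoint {S : Type*} [Fintype S]
    (R : Finset ((S → ℕ) × (S → ℕ))) (k : (S → ℕ) × (S → ℕ) → ℝ)
    (q : S → ℝ) : Prop :=
  (∀ i, 0 < q i) ∧
    ∀ r ∈ R, k r * ∏ i, q i ^ r.1 i = k (r.2, r.1) * ∏ i, q i ^ r.2 i

/-- The stoichiometric subspace `H_R`: the real span of `{y' − y : (y,y') ∈ R}`. -/
def stoichSubspace {S : Type*} [Fintype S]
    (R : Finset ((S → ℕ) × (S → ℕ))) : Submodule ℝ (S → ℝ) :=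
  Submodule.span ℝ ((fun r : (S → ℕ) × (S → ℕ) => fun i => ((r.2 i : ℝ) - (r.1 i : ℝ))) '' ↑R)

section DBAux
open Real Finset Filter Topology in
section
variable {S : Type*} [Fintype S]

noncomputable def dbg (d : S → ℝ) (x : S → ℝ) : ℝ :=
  ∑ i, (x i * Real.log (x i) - d i * x i)

lemma db_lb (d t : ℝ) (ht : 0 ≤ t) : -Real.exp d ≤ t * Real.log t - d * t := by
  rcases eq_or_lt_of_le ht with h | h
  · simp [← h]; positivity
  · have h1 := Real.add_one_le_exp (-(Real.log t - d + 1))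
    have h2 : Real.exp (-(Real.log t - d + 1)) = Real.exp d / (t * Real.exp 1) := by
      rw [show -(Real.log t - d + 1) = d + (-Real.log t + -1) by ring, Real.exp_add,
        Real.exp_add, Real.exp_neg, Real.exp_neg, Real.exp_log h]
      ring
    have he : (0:ℝ) < Real.exp 1 := Real.exp_pos 1
    have hd : (0:ℝ) < Real.exp d := Real.exp_pos d
    rw [h2] at h1
    have h3 : (-(Real.log t - d + 1) + 1) * (t * Real.exp 1) ≤ Real.exp d := by
      rw [← le_div_iff₀ (by positivity)]; exact h1
    nlinarith [Real.exp_one_gt_d9]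

lemma dbg_continuous (d : S → ℝ) : Continuous (dbg d) := by
  refine continuous_finset_sum _ fun i _ => Continuous.sub ?_ (continuous_const.mul (continuous_apply i))
  exact Real.continuous_mul_log.comp (continuous_apply i)

/-- coercivity -/
lemma dbg_coercive (d : S → ℝ) (x : S → ℝ) (hx : ∀ i, 0 ≤ x i) (j : S)
    (hj : Real.exp (d j + 1) ≤ x j) :
    x j - ∑ i, Real.exp (d i) ≤ dbg d x := by
  classical
  have h1 : ∀ i, -Real.exp (d i) ≤ x i * Real.log (x i) - d i * x i :=
    fun i => db_lb (d i) (x i) (hx i)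
  have hJ : x j ≤ x j * Real.log (x j) - d j * x j := by
    have hxj : (0:ℝ) < x j := lt_of_lt_of_le (Real.exp_pos _) hj
    have hlog : d j + 1 ≤ Real.log (x j) := by
      rw [← Real.log_exp (d j + 1)]
      exact Real.log_le_log (Real.exp_pos _) hj
    nlinarith
  have hsplit : ∀ (f : S → ℝ), ∑ i, f i = f j + ∑ i ∈ Finset.univ.erase j, f i :=
    fun f => (Finset.add_sum_erase _ f (Finset.mem_univ j)).symm
  have e1 := hsplit (fun i => x i * Real.log (x i) - d i * x i)
  have e2 := hsplit (fun i => Real.exp (d i))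
  have h2 : ∑ i ∈ Finset.univ.erase j, -Real.exp (d i)
      ≤ ∑ i ∈ Finset.univ.erase j, (x i * Real.log (x i) - d i * x i) :=
    Finset.sum_le_sum fun i _ => h1 i
  have h3 : ∑ i ∈ Finset.univ.erase j, -Real.exp (d i)
      = -(∑ i ∈ Finset.univ.erase j, Real.exp (d i)) := by
    simp
  have hej : (0:ℝ) < Real.exp (d j) := Real.exp_pos _
  rw [dbg]
  linarith

lemma db_cvx (d a b t : ℝ) (ha : 0 ≤ a) (hb : 0 ≤ b) (ht0 : 0 ≤ t) (ht1 : t ≤ 1) :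
    (a + t*(b-a)) * Real.log (a + t*(b-a)) - d*(a + t*(b-a)) ≤
      (a*Real.log a - d*a) + t*((b*Real.log b - d*b) - (a*Real.log a - d*a)) := by
  have h := Real.convexOn_mul_log.2 (Set.mem_Ici.2 ha) (Set.mem_Ici.2 hb)
    (by linarith : (0:ℝ) ≤ 1 - t) ht0 (by ring)
  simp only [smul_eq_mul] at h
  have heq : (1-t)*a + t*b = a + t*(b-a) := by ring
  rw [heq] at h
  nlinarith [h]

lemma db_birch (H : Submodule ℝ (S → ℝ)) (q x0 : S → ℝ)
    (_hq : ∀ i, 0 < q i) (hx0 : ∀ i, 0 < x0 i) :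
    ∃ x : S → ℝ, (∀ i, 0 < x i) ∧ x - x0 ∈ H ∧
      ∀ v ∈ H, ∑ i, (Real.log (x i) - Real.log (q i)) * v i = 0 := by
  classical
  set d : S → ℝ := fun i => 1 + Real.log (q i) with hd
  set E : ℝ := ∑ i, Real.exp (d i) with hE
  have hE0 : 0 ≤ E := Finset.sum_nonneg fun i _ => (Real.exp_pos _).le
  set B : ℝ := (1 + ∑ i, Real.exp (d i + 1)) + (|dbg d x0| + E + 1) + ∑ i, x0 i with hB
  have hsum_exp : 0 ≤ ∑ i, Real.exp (d i + 1) := Finset.sum_nonneg fun i _ => (Real.exp_pos _).le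
  have hsum_x0 : 0 ≤ ∑ i, x0 i := Finset.sum_nonneg fun i _ => (hx0 i).le
  have habs : 0 ≤ |dbg d x0| := abs_nonneg _
  have hB1 : ∀ j, Real.exp (d j + 1) ≤ B := by
    intro j
    have := Finset.single_le_sum (f := fun i => Real.exp (d i + 1))
      (fun i _ => (Real.exp_pos _).le) (Finset.mem_univ j)
    rw [hB]; linarith
  have hB2 : dbg d x0 + E + 1 ≤ B := by
    have := le_abs_self (dbg d x0); rw [hB]; linarith
  have hB3 : ∀ j, x0 j < B := by
    intro j
    have := Finset.single_le_sum (f := fun i => x0 i) (fun i _ => (hx0 i).le) (Finset.mem_univ j)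
    rw [hB]; linarith
  -- the compact feasible set
  set K : Set (S → ℝ) := {x | x - x0 ∈ H} ∩ Set.Icc 0 (fun _ => B) with hK
  have hKclosed : IsClosed {x : S → ℝ | x - x0 ∈ H} := by
    have h1 : IsClosed (H : Set (S → ℝ)) := H.closed_of_finiteDimensional
    have h2 : Continuous (fun x : S → ℝ => x - x0) := continuous_id.sub continuous_const
    exact h1.preimage h2
  have hKcomp : IsCompact K := IsCompact.inter_left isCompact_Icc hKclosed
  have hx0K : x0 ∈ K := by
    refine ⟨by simp [Submodule.zero_mem], ?_, ?_⟩
    · intro i; exact (hx0 i).le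
    · intro i; exact (hB3 i).le
  obtain ⟨xs, hxsK, hmin⟩ := hKcomp.exists_isMinOn ⟨x0, hx0K⟩ (dbg_continuous d).continuousOn
  have hmin' : ∀ y ∈ K, dbg d xs ≤ dbg d y := fun y hy => isMinOn_iff.1 hmin y hy
  have hgle : dbg d xs ≤ dbg d x0 := hmin' x0 hx0K
  obtain ⟨hxsH, hxs0, hxsB⟩ := hxsK
  have hxs0' : ∀ i, 0 ≤ xs i := fun i => hxs0 i
  have hxsB' : ∀ i, xs i ≤ B := fun i => hxsB i
  -- all coordinates < B
  have hlt : ∀ i, xs i < B := by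
    intro j
    rcases lt_or_ge (xs j) B with h | h
    · exact h
    · exfalso
      have h1 : Real.exp (d j + 1) ≤ xs j := le_trans (hB1 j) h
      have h2 := dbg_coercive d xs hxs0' j h1
      linarith
  -- positivity of all coordinates
  have hpos : ∀ i, 0 < xs i := by
    intro j
    rcases lt_or_ge 0 (xs j) with h | h
    · exact h
    · exfalso
      have hxj : xs j = 0 := le_antisymm h (hxs0' j)
      set C : ℝ := ∑ i ∈ Finset.univ.erase j,
        ((x0 i * Real.log (x0 i) - d i * x0 i) - (xs i * Real.log (xs i) - d i * xs i)) with hC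
      set A : ℝ := C + x0 j * (Real.log (x0 j) - d j) with hA
      set t : ℝ := min (1/2) (Real.exp (-(A + 1) / x0 j)) with ht
      have ht0 : 0 < t := lt_min (by norm_num) (Real.exp_pos _)
      have ht1 : t ≤ 1 := le_trans (min_le_left _ _) (by norm_num)
      have hlogt : Real.log t ≤ -(A + 1) / x0 j := by
        calc Real.log t ≤ Real.log (Real.exp (-(A + 1) / x0 j)) :=
              Real.log_le_log ht0 (min_le_right _ _)
          _ = -(A + 1) / x0 j := Real.log_exp _
      set y : S → ℝ := fun i => xs i + t * (x0 i - xs i) with hy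
      have hyK : y ∈ K := by
        refine ⟨?_, ?_, ?_⟩
        · have : y - x0 = (1 - t) • (xs - x0) := by
            funext i; simp [hy, smul_eq_mul]; ring
          rw [Set.mem_setOf_eq, this]
          exact H.smul_mem _ hxsH
        · intro i
          show (0:ℝ) ≤ xs i + t * (x0 i - xs i)
          have := hxs0' i; have := (hx0 i).le
          nlinarith
        · intro i
          show xs i + t * (x0 i - xs i) ≤ B
          have := hxsB' i; have := (hB3 i).le
          nlinarith
      have hgy : dbg d xs ≤ dbg d y := hmin' y hyK
      -- upper bound on dbg d y - dbg d xs
      have hsplit : ∀ (f : S → ℝ), ∑ i, f i = f j + ∑ i ∈ Finset.univ.erase j, f i :=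
        fun f => (Finset.add_sum_erase _ f (Finset.mem_univ j)).symm
      have hcvx : ∀ i ∈ Finset.univ.erase j,
          y i * Real.log (y i) - d i * y i ≤
            (xs i * Real.log (xs i) - d i * xs i)
            + t * ((x0 i * Real.log (x0 i) - d i * x0 i) - (xs i * Real.log (xs i) - d i * xs i)) :=
        fun i _ => db_cvx (d i) (xs i) (x0 i) t (hxs0' i) (hx0 i).le ht0.le ht1
      have hyj : y j = t * x0 j := by simp [hy, hxj]
      have hfyj : y j * Real.log (y j) - d j * y j
          = t * (x0 j * (Real.log t + Real.log (x0 j) - d j)) := by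
        rw [hyj, Real.log_mul (ne_of_gt ht0) (ne_of_gt (hx0 j))]
        ring
      have hfxj : xs j * Real.log (xs j) - d j * xs j = 0 := by rw [hxj]; ring
      have hub : dbg d y - dbg d xs ≤ t * C + t * (x0 j * (Real.log t + Real.log (x0 j) - d j)) := by
        rw [dbg, dbg, hsplit (fun i => y i * Real.log (y i) - d i * y i),
          hsplit (fun i => xs i * Real.log (xs i) - d i * xs i)]
        rw [hfyj, hfxj]
        have hsum_le : ∑ i ∈ Finset.univ.erase j, (y i * Real.log (y i) - d i * y i)
            ≤ ∑ i ∈ Finset.univ.erase j, ((xs i * Real.log (xs i) - d i * xs i)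
              + t * ((x0 i * Real.log (x0 i) - d i * x0 i)
                - (xs i * Real.log (xs i) - d i * xs i))) :=
          Finset.sum_le_sum hcvx
        rw [Finset.sum_add_distrib, ← Finset.mul_sum] at hsum_le
        rw [hC]
        linarith
      have hAle : 0 ≤ A + x0 j * Real.log t := by
        have h0 : 0 ≤ t * C + t * (x0 j * (Real.log t + Real.log (x0 j) - d j)) := by linarith
        have h1 : t * C + t * (x0 j * (Real.log t + Real.log (x0 j) - d j))
            = t * (A + x0 j * Real.log t) := by rw [hA]; ring
        rw [h1] at h0
        by_contra hcon
        push_neg at hcon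
        nlinarith
      have : x0 j * Real.log t ≤ -(A + 1) := by
        have h6 := mul_le_mul_of_nonneg_left hlogt (hx0 j).le
        have h7 : x0 j * (-(A + 1) / x0 j) = -(A + 1) := by
          field_simp [ne_of_gt (hx0 j)]
        rw [h7] at h6
        linarith
      linarith
  -- stationarity
  refine ⟨xs, hpos, hxsH, ?_⟩
  intro v hv
  set φ : ℝ → ℝ := fun t => dbg d (fun i => xs i + t * v i) with hφ
  have hφ0 : φ 0 = dbg d xs := by simp [hφ]
  have hmem : ∀ᶠ t in 𝓝 (0:ℝ), (fun i => xs i + t * v i) ∈ K := by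
    have hIcc : ∀ᶠ t in 𝓝 (0:ℝ), ∀ i, xs i + t * v i ∈ Set.Ioo 0 B := by
      rw [Filter.eventually_all]
      intro i
      have hc : Filter.Tendsto (fun t : ℝ => xs i + t * v i) (𝓝 0) (𝓝 (xs i)) := by
        have : Continuous (fun t : ℝ => xs i + t * v i) :=
          continuous_const.add (continuous_id.mul continuous_const)
        have := this.tendsto 0
        simpa using this
      exact hc.eventually (isOpen_Ioo.eventually_mem ⟨hpos i, hlt i⟩)
    refine hIcc.mono fun t ht => ⟨?_, fun i => (ht i).1.le, fun i => (ht i).2.le⟩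
    · have : (fun i => xs i + t * v i) - x0 = (xs - x0) + t • v := by
        funext i; simp [smul_eq_mul]; ring
      rw [Set.mem_setOf_eq, this]
      exact H.add_mem hxsH (H.smul_mem _ hv)
  have hloc : IsLocalMin φ 0 := by
    refine hmem.mono fun t ht => ?_
    rw [hφ0]
    exact hmin' _ ht
  have hder : HasDerivAt φ (∑ i, (Real.log (xs i) - Real.log (q i)) * v i) 0 := by
    have hterm : ∀ i ∈ Finset.univ, HasDerivAt
        (fun t : ℝ => (xs i + t * v i) * Real.log (xs i + t * v i) - d i * (xs i + t * v i))
        ((Real.log (xs i) - Real.log (q i)) * v i) 0 := by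
      intro i _
      have h1 : HasDerivAt (fun t : ℝ => xs i + t * v i) (v i) 0 := by
        simpa using ((hasDerivAt_id (0:ℝ)).mul_const (v i)).const_add (xs i)
      have h2 : HasDerivAt (fun y : ℝ => y * Real.log y) (Real.log (xs i) + 1) (xs i) :=
        Real.hasDerivAt_mul_log (ne_of_gt (hpos i))
      have e0 : xs i + 0 * v i = xs i := by ring
      rw [← e0] at h2
      have h3 := h2.comp 0 h1
      have h4 : HasDerivAt (fun t : ℝ => d i * (xs i + t * v i)) (d i * v i) 0 := h1.const_mul (d i)
      have h5 := h3.sub h4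
      have e1 : (Real.log (xs i + 0 * v i) + 1) * v i - d i * v i
          = (Real.log (xs i) - Real.log (q i)) * v i := by
        rw [e0, hd]; ring
      rw [e1] at h5
      exact h5
    exact HasDerivAt.fun_sum hterm
  have := hloc.hasDerivAt_eq_zero hder
  exact this


lemma db_mono (a b : ℝ) (ha : 0 < a) (hb : 0 < b) : 0 ≤ (Real.log a - Real.log b) * (a - b) := by
  rcases le_total a b with h | h
  · have := Real.log_le_log ha h
    nlinarith
  · have := Real.log_le_log hb h
    nlinarith

lemma db_mono' (a b : ℝ) (ha : 0 < a) (hb : 0 < b)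
    (h : (Real.log a - Real.log b) * (a - b) = 0) : a = b := by
  rcases mul_eq_zero.1 h with h' | h'
  · have : Real.log a = Real.log b := by linarith
    exact Real.log_injOn_pos (Set.mem_Ioi.2 ha) (Set.mem_Ioi.2 hb) this
  · linarith

lemma db_log_prod {S : Type*} [Fintype S] (x : S → ℝ) (hx : ∀ i, 0 < x i) (y : S → ℕ) :
    Real.log (∏ i, x i ^ y i) = ∑ i, (y i : ℝ) * Real.log (x i) := by
  rw [Real.log_prod (fun i _ => ne_of_gt (pow_pos (hx i) _))]
  exact Finset.sum_congr rfl fun i _ => by rw [Real.log_pow]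

lemma db_bridge {S : Type*} [Fintype S]
    (R : Finset ((S → ℕ) × (S → ℕ))) (k : (S → ℕ) × (S → ℕ) → ℝ)
    (hk : ∀ r ∈ R, 0 < k r) (hrev : ∀ r ∈ R, (r.2, r.1) ∈ R)
    (q : S → ℝ) (hq : ∀ i, 0 < q i)
    (hqdb : ∀ r ∈ R, k r * ∏ i, q i ^ r.1 i = k (r.2, r.1) * ∏ i, q i ^ r.2 i)
    (x : S → ℝ) (hx : ∀ i, 0 < x i) :
    (∀ r ∈ R, k r * ∏ i, x i ^ r.1 i = k (r.2, r.1) * ∏ i, x i ^ r.2 i) ↔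
      (∀ v ∈ stoichSubspace R, ∑ i, (Real.log (x i) - Real.log (q i)) * v i = 0) := by
  have key : ∀ r ∈ R,
      ((k r * ∏ i, x i ^ r.1 i = k (r.2, r.1) * ∏ i, x i ^ r.2 i) ↔
        ∑ i, (Real.log (x i) - Real.log (q i)) * ((r.2 i : ℝ) - (r.1 i : ℝ)) = 0) := by
    intro r hr
    have Px1 : (0:ℝ) < ∏ i, x i ^ r.1 i := Finset.prod_pos fun i _ => pow_pos (hx i) _
    have Px2 : (0:ℝ) < ∏ i, x i ^ r.2 i := Finset.prod_pos fun i _ => pow_pos (hx i) _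
    have Pq1 : (0:ℝ) < ∏ i, q i ^ r.1 i := Finset.prod_pos fun i _ => pow_pos (hq i) _
    have Pq2 : (0:ℝ) < ∏ i, q i ^ r.2 i := Finset.prod_pos fun i _ => pow_pos (hq i) _
    have hkr := hk r hr
    have hkr' := hk _ (hrev r hr)
    have hqr := hqdb r hr
    have hsum : ∑ i, (Real.log (x i) - Real.log (q i)) * ((r.2 i : ℝ) - (r.1 i : ℝ)) =
        (Real.log (∏ i, x i ^ r.2 i) + Real.log (∏ i, q i ^ r.1 i)) -
        (Real.log (∏ i, x i ^ r.1 i) + Real.log (∏ i, q i ^ r.2 i)) := by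
      rw [db_log_prod x hx, db_log_prod x hx, db_log_prod q hq, db_log_prod q hq,
        ← Finset.sum_add_distrib, ← Finset.sum_add_distrib, ← Finset.sum_sub_distrib]
      exact Finset.sum_congr rfl fun i _ => by ring
    constructor
    · intro h
      rw [hsum]
      have hprod : (∏ i, x i ^ r.1 i) * (∏ i, q i ^ r.2 i)
          = (∏ i, x i ^ r.2 i) * (∏ i, q i ^ r.1 i) := by
        have h1 : k r * ((∏ i, x i ^ r.1 i) * (∏ i, q i ^ r.2 i))
            = k r * ((∏ i, x i ^ r.2 i) * (∏ i, q i ^ r.1 i)) := by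
          nlinarith [h, hqr]
        exact mul_left_cancel₀ (ne_of_gt hkr) h1
      rw [← Real.log_mul (ne_of_gt Px2) (ne_of_gt Pq1), ← Real.log_mul (ne_of_gt Px1) (ne_of_gt Pq2),
        ← hprod]
      ring
    · intro h
      rw [hsum] at h
      have hlog : Real.log ((∏ i, x i ^ r.2 i) * (∏ i, q i ^ r.1 i))
          = Real.log ((∏ i, x i ^ r.1 i) * (∏ i, q i ^ r.2 i)) := by
        rw [Real.log_mul (ne_of_gt Px2) (ne_of_gt Pq1), Real.log_mul (ne_of_gt Px1) (ne_of_gt Pq2)]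
        linarith
      have hprod : (∏ i, x i ^ r.2 i) * (∏ i, q i ^ r.1 i)
          = (∏ i, x i ^ r.1 i) * (∏ i, q i ^ r.2 i) :=
        Real.log_injOn_pos (Set.mem_Ioi.2 (by positivity)) (Set.mem_Ioi.2 (by positivity)) hlog
      have h2 : (k (r.2, r.1) * ∏ i, x i ^ r.2 i) * ∏ i, q i ^ r.2 i
          = (k r * ∏ i, x i ^ r.1 i) * ∏ i, q i ^ r.2 i := by
        nlinarith [hprod, hqr]
      exact (mul_right_cancel₀ (ne_of_gt Pq2) h2).symm
  constructor
  · intro h v hv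
    induction hv using Submodule.span_induction with
    | mem v hv =>
      obtain ⟨r, hr, rfl⟩ := hv
      exact (key r hr).1 (h r hr)
    | zero => simp
    | add v w _ _ hv hw =>
      simp only [Pi.add_apply, mul_add, Finset.sum_add_distrib, hv, hw, add_zero]
    | smul a v _ hv =>
      simp only [Pi.smul_apply, smul_eq_mul]
      rw [show ∀ u : S → ℝ, ∑ i, u i * (a * v i) = a * ∑ i, u i * v i from
        fun u => by rw [Finset.mul_sum]; exact Finset.sum_congr rfl fun i _ => by ring]
      rw [hv, mul_zero]
  · intro h r hr
    exact (key r hr).2 (h _ (Submodule.subset_span ⟨r, hr, rfl⟩))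

end
end DBAux

/-- for a detailed balanced reaction system and any strictly positive
`x0`, there is a unique point of detailed balance in `(x0 + H_R) ∩ ℝ^S_{>0}`. -/
theorem unique_detailed_balance_point_in_class
    {S : Type*} [Fintype S]
    (R : Finset ((S → ℕ) × (S → ℕ))) (k : (S → ℕ) × (S → ℕ) → ℝ)
    (hk : ∀ r ∈ R, 0 < k r)
    (hrev : ∀ r ∈ R, (r.2, r.1) ∈ R)
    (hdb : ∃ q : S → ℝ, IsDetailedBalancePoint R k q)
    (x0 : S → ℝ) (hx0 : ∀ i, 0 < x0 i) :
    ∃! xstar : S → ℝ,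
      xstar - x0 ∈ stoichSubspace R ∧ IsDetailedBalancePoint R k xstar := by
  obtain ⟨q, hqpos, hqdb⟩ := hdb
  obtain ⟨xs, hpos, hH, horth⟩ := db_birch (stoichSubspace R) q x0 hqpos hx0
  refine ⟨xs, ⟨hH, hpos, (db_bridge R k hk hrev q hqpos hqdb xs hpos).2 horth⟩, ?_⟩
  rintro y ⟨hyH, hypos, hydb⟩
  have hyorth := (db_bridge R k hk hrev q hqpos hqdb y hypos).1 hydb
  have hdiff : y - xs ∈ stoichSubspace R := by
    have h := Submodule.sub_mem _ hyH hH
    have e : (y - x0) - (xs - x0) = y - xs := by abel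
    rwa [e] at h
  have hsum : ∑ i, (Real.log (y i) - Real.log (xs i)) * (y i - xs i) = 0 := by
    have h1 := hyorth _ hdiff
    have h2 := horth _ hdiff
    simp only [Pi.sub_apply] at h1 h2
    have e : ∑ i, (Real.log (y i) - Real.log (xs i)) * (y i - xs i)
        = ∑ i, (Real.log (y i) - Real.log (q i)) * (y i - xs i)
          - ∑ i, (Real.log (xs i) - Real.log (q i)) * (y i - xs i) := by
      rw [← Finset.sum_sub_distrib]
      exact Finset.sum_congr rfl fun i _ => by ring
    rw [e, h1, h2, sub_zero]
  have hterm : ∀ i ∈ Finset.univ, (0:ℝ) ≤ (Real.log (y i) - Real.log (xs i)) * (y i - xs i) :=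
    fun i _ => db_mono (y i) (xs i) (hypos i) (hpos i)
  have hall := (Finset.sum_eq_zero_iff_of_nonneg hterm).1 hsum
  funext i
  exact db_mono' (y i) (xs i) (hypos i) (hpos i) (hall i (Finset.mem_univ i))
end

section
/- Let (S, R, k) be a detailed balanced reaction system with point of detailed balance q, and let x : [0,∞) → ℝ^S_{>0} be a mass-action trajectory. Then the function t ↦ D(x(t)‖q) has nonpositive derivative for all t, and its derivative at time t equals zero if and only if x(t) is itself a point of detailed balance. -/
/-- Sign lemma: `(a - b) * (log b - log a) ≤ 0`, vanishing iff `a = b`. -/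
lemma sign_lemma_aux (a b : ℝ) (ha : 0 < a) (hb : 0 < b) :
    (a - b) * (Real.log b - Real.log a) ≤ 0 ∧
    ((a - b) * (Real.log b - Real.log a) = 0 ↔ a = b) := by
  rcases lt_trichotomy a b with h | h | h
  · have h1 : a - b < 0 := by linarith
    have h2 : 0 < Real.log b - Real.log a := sub_pos.2 (Real.log_lt_log ha h)
    have hlt := mul_neg_of_neg_of_pos h1 h2
    exact ⟨hlt.le, ⟨fun h' => absurd h' hlt.ne, fun h' => absurd h' h.ne⟩⟩
  · subst h; simp
  · have h1 : 0 < a - b := by linarith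
    have h2 : Real.log b - Real.log a < 0 := sub_neg.2 (Real.log_lt_log hb h)
    have hlt := mul_neg_of_pos_of_neg h1 h2
    exact ⟨hlt.le, ⟨fun h' => absurd h' hlt.ne, fun h' => absurd h' h.ne'⟩⟩

/-- Derivative of the single-species entropy term. -/
lemma hasDerivAt_ent_aux (c : ℝ) (hc : 0 < c) (u : ℝ) (hu : 0 < u) :
    HasDerivAt (fun w : ℝ => w * Real.log (w / c) - w + c) (Real.log (u / c)) u := by
  have h1 : HasDerivAt (fun w : ℝ => w * (Real.log w - Real.log c) - w + c)
      (Real.log u - Real.log c) u := by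
    have hlog := (Real.hasDerivAt_log hu.ne').sub_const (Real.log c)
    have h := (((hasDerivAt_id u).fun_mul hlog).fun_sub (hasDerivAt_id u)).add_const c
    refine h.congr_deriv ?_
    simp only [id_eq, one_mul, mul_inv_cancel₀ hu.ne']
    ring
  have heq : (fun w : ℝ => w * Real.log (w / c) - w + c) =ᶠ[nhds u]
      (fun w : ℝ => w * (Real.log w - Real.log c) - w + c) := by
    filter_upwards [eventually_gt_nhds hu] with w hw
    rw [Real.log_div hw.ne' hc.ne']
  rw [Real.log_div hu.ne' hc.ne']
  exact h1.congr_of_eventuallyEq heq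

/-- along a mass-action trajectory of a detailed balanced reaction
system with point of detailed balance `q`, the function `t ↦ D(x(t)‖q)` has
nonpositive derivative, vanishing exactly when `x(t)` is itself a point of
detailed balance. -/
theorem relative_entropy_lyapunov_detailed_balance
    {S : Type*} [Fintype S]
    (R : Finset ((S → ℕ) × (S → ℕ))) (k : (S → ℕ) × (S → ℕ) → ℝ)
    (hk : ∀ r ∈ R, 0 < k r)
    (hrev : ∀ r ∈ R, (r.2, r.1) ∈ R)
    (q : S → ℝ) (hq : IsDetailedBalancePoint R k q)
    (x : ℝ → S → ℝ)
    (hxpos : ∀ t, 0 ≤ t → ∀ i, 0 < x t i)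
    (hode : ∀ t, 0 ≤ t → HasDerivAt x
      (∑ r ∈ R, (k r * ∏ i, x t i ^ r.1 i) •
        (fun i => ((r.2 i : ℝ) - (r.1 i : ℝ)))) t) :
    ∀ t, 0 ≤ t → ∃ d : ℝ,
      HasDerivAt (fun s => KL (x s) q) d t ∧ d ≤ 0 ∧
        (d = 0 ↔ IsDetailedBalancePoint R k (x t)) := by
  intro t ht
  obtain ⟨hqpos, hdb⟩ := hq
  set v : S → ℝ := ∑ r ∈ R, (k r * ∏ i, x t i ^ r.1 i) •
      (fun i => ((r.2 i : ℝ) - (r.1 i : ℝ))) with hv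
  have hxi : ∀ i, HasDerivAt (fun s => x s i) (v i) t :=
    fun i => hasDerivAt_pi.1 (hode t ht) i
  set d : ℝ := ∑ i, Real.log (x t i / q i) * v i with hd_def
  -- the derivative exists
  have hd : HasDerivAt (fun s => KL (x s) q) d t := by
    have h : HasDerivAt
        (fun s => ∑ i, (x s i * Real.log (x s i / q i) - x s i + q i)) d t := by
      apply HasDerivAt.fun_sum
      intro i _
      exact (hasDerivAt_ent_aux (q i) (hqpos i) (x t i) (hxpos t ht i)).comp t (hxi i)
    simpa [KL] using h
  -- notation
  set A : (S → ℕ) → ℝ := fun y => ∏ i, (x t i / q i) ^ y i with hA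
  set Q : (S → ℕ) → ℝ := fun y => ∏ i, q i ^ y i with hQ
  have hApos : ∀ y, 0 < A y := fun y =>
    Finset.prod_pos fun i _ => pow_pos (div_pos (hxpos t ht i) (hqpos i)) _
  have hQpos : ∀ y, 0 < Q y := fun y =>
    Finset.prod_pos fun i _ => pow_pos (hqpos i) _
  have hXAQ : ∀ y : S → ℕ, (∏ i, x t i ^ y i) = A y * Q y := by
    intro y
    rw [hA, hQ, ← Finset.prod_mul_distrib]
    exact Finset.prod_congr rfl fun i _ => by
      rw [← mul_pow, div_mul_cancel₀ _ (hqpos i).ne']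
  have hlogA : ∀ y : S → ℕ, Real.log (A y) = ∑ i, (y i : ℝ) * Real.log (x t i / q i) := by
    intro y
    rw [hA, Real.log_prod (fun i _ =>
      (pow_pos (div_pos (hxpos t ht i) (hqpos i)) _).ne')]
    exact Finset.sum_congr rfl fun i _ => by rw [Real.log_pow]
  -- rewrite d as a sum over reactions
  set F : (S → ℕ) × (S → ℕ) → ℝ := fun r =>
    (k r * Q r.1 * A r.1) * (Real.log (A r.2) - Real.log (A r.1)) with hF
  have hdF : d = ∑ r ∈ R, F r := by
    have hvi : ∀ i, v i = ∑ r ∈ R, (k r * ∏ j, x t j ^ r.1 j) * ((r.2 i : ℝ) - (r.1 i : ℝ)) := by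
      intro i
      rw [hv, Finset.sum_apply]
      exact Finset.sum_congr rfl fun r _ => rfl
    rw [hd_def]
    simp only [hvi, Finset.mul_sum]
    rw [Finset.sum_comm]
    refine Finset.sum_congr rfl fun r _ => ?_
    rw [hF]
    simp only
    rw [hlogA r.2, hlogA r.1, hXAQ r.1, ← Finset.sum_sub_distrib, Finset.mul_sum]
    exact Finset.sum_congr rfl fun i _ => by ring
  -- pair each reaction with its reverse
  have hswap : ∑ r ∈ R, F (Prod.swap r) = ∑ r ∈ R, F r := by
    refine Finset.sum_equiv (Equiv.prodComm (S → ℕ) (S → ℕ)) (fun r => ?_) (fun r _ => rfl)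
    constructor
    · intro hr; exact hrev r hr
    · intro hr
      have := hrev _ hr
      simpa using this
  set G : (S → ℕ) × (S → ℕ) → ℝ := fun r =>
    (k r * Q r.1) * ((A r.1 - A r.2) * (Real.log (A r.2) - Real.log (A r.1))) with hG
  have hFG : ∀ r ∈ R, F r + F (Prod.swap r) = G r := by
    intro r hr
    have hc : k (r.2, r.1) * Q r.2 = k r * Q r.1 := (hdb r hr).symm
    rw [hF, hG]
    simp only [Prod.fst_swap, Prod.snd_swap, Prod.swap]
    rw [show k (r.2, r.1) * Q r.2 * A r.2 * (Real.log (A r.1) - Real.log (A r.2))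
        = (k (r.2, r.1) * Q r.2) * (A r.2 * (Real.log (A r.1) - Real.log (A r.2))) by ring,
      hc]
    ring
  have h2d : 2 * d = ∑ r ∈ R, G r := by
    rw [← Finset.sum_congr rfl hFG, Finset.sum_add_distrib, hswap, hdF]
    ring
  have hGnonpos : ∀ r ∈ R, G r ≤ 0 := by
    intro r hr
    have hcpos : 0 < k r * Q r.1 := mul_pos (hk r hr) (hQpos r.1)
    exact mul_nonpos_of_nonneg_of_nonpos hcpos.le
      (sign_lemma_aux _ _ (hApos r.1) (hApos r.2)).1
  have hdle : d ≤ 0 := by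
    have := Finset.sum_nonpos hGnonpos
    linarith [h2d ▸ this]
  refine ⟨d, hd, hdle, ?_⟩
  -- characterize d = 0
  have hzero : d = 0 ↔ ∀ r ∈ R, A r.1 = A r.2 := by
    constructor
    · intro h0
      have hsum0 : ∑ r ∈ R, G r = 0 := by rw [← h2d, h0]; ring
      have hall := (Finset.sum_eq_zero_iff_of_nonpos hGnonpos).1 hsum0
      intro r hr
      have hGr := hall r hr
      have hcpos : 0 < k r * Q r.1 := mul_pos (hk r hr) (hQpos r.1)
      rw [hG] at hGr
      simp only at hGr
      have := (mul_eq_zero.1 hGr).resolve_left hcpos.ne'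
      exact (sign_lemma_aux _ _ (hApos r.1) (hApos r.2)).2.1 this
    · intro hAeq
      have hG0 : ∀ r ∈ R, G r = 0 := by
        intro r hr
        rw [hG]; simp only
        rw [hAeq r hr]; ring
      have : ∑ r ∈ R, G r = 0 := Finset.sum_eq_zero hG0
      linarith [h2d ▸ this]
  rw [hzero]
  constructor
  · intro hAeq
    refine ⟨hxpos t ht, fun r hr => ?_⟩
    rw [hXAQ r.1, hXAQ r.2, hAeq r hr]
    rw [show k r * (A r.2 * Q r.1) = A r.2 * (k r * Q r.1) by ring, hdb r hr]
    ring
  · rintro ⟨-, hdbx⟩ r hr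
    have h1 : k r * (A r.1 * Q r.1) = k (r.2, r.1) * (A r.2 * Q r.2) := by
      rw [← hXAQ r.1, ← hXAQ r.2]; exact hdbx r hr
    have h2 : k (r.2, r.1) * Q r.2 = k r * Q r.1 := (hdb r hr).symm
    have hcpos : 0 < k r * Q r.1 := mul_pos (hk r hr) (hQpos r.1)
    have h3 : (k r * Q r.1) * A r.1 = (k r * Q r.1) * A r.2 := by
      calc (k r * Q r.1) * A r.1 = k r * (A r.1 * Q r.1) := by ring
        _ = k (r.2, r.1) * (A r.2 * Q r.2) := h1
        _ = (k (r.2, r.1) * Q r.2) * A r.2 := by ring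
        _ = (k r * Q r.1) * A r.2 := by rw [h2]
    exact mul_left_cancel₀ hcpos.ne' h3
end

section
/- Let (S, R, k) be a detailed balanced reaction system with point of detailed balance q, let x0 ∈ ℝ^S_{>0}, and let x* be the unique point of detailed balance in (x0 + H_R) ∩ ℝ^S_{>0}. Then x* is the E-projection of q to the polyhedron (x0 + H_R) ∩ ℝ^S_{≥0}, i.e., x* is the unique minimizer of x ↦ D(x‖q) over (x0 + H_R) ∩ ℝ^S_{≥0}. -/
lemma log_div_mul (a b : ℝ) (ha : 0 ≤ a) (hb : 0 < b) :
    a * Real.log (a / b) = a * Real.log a - a * Real.log b := by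
  rcases eq_or_lt_of_le ha with h | h
  · simp [← h]
  · rw [Real.log_div (ne_of_gt h) (ne_of_gt hb)]; ring

lemma kl_term_nonneg_s10 (a b : ℝ) (ha : 0 ≤ a) (hb : 0 < b) :
    0 ≤ a * Real.log (a / b) - a + b := by
  rcases eq_or_lt_of_le ha with h | h
  · simp [← h]; linarith
  · have h1 : Real.log (b / a) ≤ b / a - 1 :=
      Real.log_le_sub_one_of_pos (div_pos hb h)
    have h4 : a * Real.log (b / a) ≤ a * (b / a - 1) :=
      mul_le_mul_of_nonneg_left h1 ha
    have h5 : a * (b / a - 1) = b - a := by field_simp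
    have h6 : Real.log (a / b) = - Real.log (b / a) := by
      rw [Real.log_div h.ne' hb.ne', Real.log_div hb.ne' h.ne']; ring
    nlinarith

lemma kl_term_pos (a b : ℝ) (ha : 0 ≤ a) (hb : 0 < b) (hne : a ≠ b) :
    0 < a * Real.log (a / b) - a + b := by
  rcases eq_or_lt_of_le ha with h | h
  · simp [← h]; linarith
  · have hba : b / a ≠ 1 := by
      intro hh
      exact hne ((div_eq_one_iff_eq h.ne').mp hh).symm
    have h1 : Real.log (b / a) < b / a - 1 :=
      Real.log_lt_sub_one_of_pos (div_pos hb h) hba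
    have h4 : a * Real.log (b / a) < a * (b / a - 1) :=
      (mul_lt_mul_iff_right₀ h).mpr h1
    have h5 : a * (b / a - 1) = b - a := by field_simp
    have h6 : Real.log (a / b) = - Real.log (b / a) := by
      rw [Real.log_div h.ne' hb.ne', Real.log_div hb.ne' h.ne']; ring
    nlinarith

lemma db_log {S : Type*} [Fintype S] (r : (S → ℕ) × (S → ℕ)) (k1 k2 : ℝ)
    (hk1 : 0 < k1) (hk2 : 0 < k2) (x : S → ℝ) (hx : ∀ i, 0 < x i)
    (h : k1 * ∏ i, x i ^ r.1 i = k2 * ∏ i, x i ^ r.2 i) :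
    ∑ i, ((r.2 i : ℝ) - (r.1 i : ℝ)) * Real.log (x i) = Real.log k1 - Real.log k2 := by
  have hp1 : (0:ℝ) < ∏ i, x i ^ r.1 i := Finset.prod_pos fun i _ => pow_pos (hx i) _
  have hp2 : (0:ℝ) < ∏ i, x i ^ r.2 i := Finset.prod_pos fun i _ => pow_pos (hx i) _
  have hl := congrArg Real.log h
  rw [Real.log_mul hk1.ne' hp1.ne', Real.log_mul hk2.ne' hp2.ne',
    Real.log_prod (fun i _ => (pow_pos (hx i) _).ne'),
    Real.log_prod (fun i _ => (pow_pos (hx i) _).ne')] at hl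
  simp only [Real.log_pow] at hl
  have e1 : ∑ i, ((r.2 i : ℝ) - (r.1 i : ℝ)) * Real.log (x i)
      = (∑ i, (r.2 i : ℝ) * Real.log (x i)) - ∑ i, (r.1 i : ℝ) * Real.log (x i) := by
    rw [← Finset.sum_sub_distrib]; congr 1; ext i; ring
  rw [e1]; linarith

lemma orth_of_span {S : Type*} [Fintype S] (R : Finset ((S → ℕ) × (S → ℕ)))
    (L : S → ℝ) (hgen : ∀ r ∈ R, ∑ i, ((r.2 i : ℝ) - (r.1 i : ℝ)) * L i = 0)
    (v : S → ℝ) (hv : v ∈ stoichSubspace R) : ∑ i, v i * L i = 0 := by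
  induction hv using Submodule.span_induction with
  | mem w hw =>
      obtain ⟨r, hr, rfl⟩ := hw
      exact hgen r (by exact_mod_cast hr)
  | zero => simp
  | add a b _ _ ha hb =>
      simp only [Pi.add_apply, add_mul, Finset.sum_add_distrib, ha, hb, add_zero]
  | smul c a _ ha =>
      simp only [Pi.smul_apply, smul_eq_mul, mul_assoc, ← Finset.mul_sum, ha, mul_zero]

/-- the unique point of detailed balance `x*` in
`(x0 + H_R) ∩ ℝ^S_{>0}` is the unique minimizer of `x ↦ D(x‖q)` over the
polyhedron `(x0 + H_R) ∩ ℝ^S_{≥0}`. -/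
theorem detailed_balance_point_is_eprojection
    {S : Type*} [Fintype S]
    (R : Finset ((S → ℕ) × (S → ℕ))) (k : (S → ℕ) × (S → ℕ) → ℝ)
    (hk : ∀ r ∈ R, 0 < k r)
    (hrev : ∀ r ∈ R, (r.2, r.1) ∈ R)
    (q : S → ℝ) (hq : IsDetailedBalancePoint R k q)
    (x0 : S → ℝ) (hx0 : ∀ i, 0 < x0 i)
    (xstar : S → ℝ)
    (hstar : xstar - x0 ∈ stoichSubspace R ∧ IsDetailedBalancePoint R k xstar)
    (huniq : ∀ z : S → ℝ, z - x0 ∈ stoichSubspace R →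
      IsDetailedBalancePoint R k z → z = xstar) :
    (∀ z : S → ℝ, z - x0 ∈ stoichSubspace R → (∀ i, 0 ≤ z i) →
        KL xstar q ≤ KL z q) ∧
    (∀ z : S → ℝ, z - x0 ∈ stoichSubspace R → (∀ i, 0 ≤ z i) →
        KL z q = KL xstar q → z = xstar) := by
  have hqpos : ∀ i, 0 < q i := hq.1
  have hxpos : ∀ i, 0 < xstar i := hstar.2.1
  set L : S → ℝ := fun i => Real.log (xstar i) - Real.log (q i) with hL
  -- orthogonality of L to generators
  have hgen : ∀ r ∈ R, ∑ i, ((r.2 i : ℝ) - (r.1 i : ℝ)) * L i = 0 := by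
    intro r hr
    have h1 := db_log r (k r) (k (r.2, r.1)) (hk r hr) (hk _ (hrev r hr)) q hqpos
      (hq.2 r hr)
    have h2 := db_log r (k r) (k (r.2, r.1)) (hk r hr) (hk _ (hrev r hr)) xstar hxpos
      (hstar.2.2 r hr)
    have e : ∑ i, ((r.2 i : ℝ) - (r.1 i : ℝ)) * L i
        = (∑ i, ((r.2 i : ℝ) - (r.1 i : ℝ)) * Real.log (xstar i))
          - ∑ i, ((r.2 i : ℝ) - (r.1 i : ℝ)) * Real.log (q i) := by
      rw [← Finset.sum_sub_distrib]; apply Finset.sum_congr rfl; intro i _; simp [hL]; ring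
    rw [e, h1, h2]; ring
  -- key decomposition
  have key : ∀ z : S → ℝ, (∀ i, 0 ≤ z i) →
      KL z q = (∑ i, (z i * Real.log (z i / xstar i) - z i + xstar i))
        + (∑ i, (z i - xstar i) * L i) + KL xstar q := by
    intro z hz
    unfold KL
    rw [← Finset.sum_add_distrib, ← Finset.sum_add_distrib]
    apply Finset.sum_congr rfl
    intro i _
    rw [log_div_mul (z i) (q i) (hz i) (hqpos i),
      log_div_mul (z i) (xstar i) (hz i) (hxpos i),
      log_div_mul (xstar i) (q i) (hxpos i).le (hqpos i)]
    simp only [hL]; ring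
  -- the linear term vanishes on the class of x0
  have hlin : ∀ z : S → ℝ, z - x0 ∈ stoichSubspace R →
      ∑ i, (z i - xstar i) * L i = 0 := by
    intro z hz
    have hm : z - xstar ∈ stoichSubspace R := by
      have := Submodule.sub_mem _ hz hstar.1
      rwa [sub_sub_sub_cancel_right] at this
    have := orth_of_span R L hgen (z - xstar) hm
    simpa using this
  constructor
  · intro z hz hznn
    have hD : 0 ≤ ∑ i, (z i * Real.log (z i / xstar i) - z i + xstar i) :=
      Finset.sum_nonneg fun i _ => kl_term_nonneg_s10 _ _ (hznn i) (hxpos i)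
    have := key z hznn
    rw [hlin z hz] at this
    linarith
  · intro z hz hznn heq
    have := key z hznn
    rw [hlin z hz] at this
    have hD : ∑ i, (z i * Real.log (z i / xstar i) - z i + xstar i) = 0 := by
      linarith
    funext i
    by_contra hne
    have hpos : 0 < z i * Real.log (z i / xstar i) - z i + xstar i :=
      kl_term_pos _ _ (hznn i) (hxpos i) hne
    have hother : ∀ j ∈ Finset.univ, 0 ≤ z j * Real.log (z j / xstar j) - z j + xstar j :=
      fun j _ => kl_term_nonneg_s10 _ _ (hznn j) (hxpos j)
    have : 0 < ∑ j, (z j * Real.log (z j / xstar j) - z j + xstar j) :=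
      Finset.sum_pos' hother ⟨i, Finset.mem_univ i, hpos⟩
    linarith
end

section
/- (M-projection scheme, Lyapunov property.) Let A = (a_{ij}) be an m×n matrix of nonnegative integers, c ∈ ℝ^n_{>0}, and define y_A : ℝ^m_{>0} → ℝ^n_{>0} by y_A(θ)_j := c_j Π_{i=1}^m θ_i^{a_{ij}}. Fix x ∈ ℝ^n_{>0}, and let θ : [0,∞) → ℝ^m_{>0} be differentiable with θ̇(t) = A(x − y_A(θ(t))). Then d/dt D(x‖y_A(θ(t))) ≤ 0 for all t, with equality at time t if and only if A(x − y_A(θ(t))) = 0. -/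
/-- The exponential-family parametrization `y_A(θ)_j = c_j ∏_i θ_i^{a_{ij}}`. -/
def yA {m n : ℕ} (A : Matrix (Fin m) (Fin n) ℕ) (c : Fin n → ℝ)
    (θ : Fin m → ℝ) : Fin n → ℝ :=
  fun j => c j * ∏ i, θ i ^ A i j

/-- M-projection scheme, Lyapunov property: along a trajectory of
`θ̇ = A(x − y_A(θ))`, the derivative of `t ↦ D(x‖y_A(θ(t)))` is nonpositive,
vanishing at time `t` iff `A(x − y_A(θ(t))) = 0`. -/
theorem mprojection_lyapunov
    {m n : ℕ} (A : Matrix (Fin m) (Fin n) ℕ) (c : Fin n → ℝ)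
    (hc : ∀ j, 0 < c j)
    (x : Fin n → ℝ) (hx : ∀ j, 0 < x j)
    (θ : ℝ → Fin m → ℝ)
    (hθpos : ∀ t, 0 ≤ t → ∀ i, 0 < θ t i)
    (hode : ∀ t, 0 ≤ t → HasDerivAt θ
      (fun i => ∑ j, (A i j : ℝ) * (x j - yA A c (θ t) j)) t) :
    ∀ t, 0 ≤ t → ∃ d : ℝ,
      HasDerivAt (fun s => KL x (yA A c (θ s))) d t ∧ d ≤ 0 ∧
        (d = 0 ↔ ∀ i, ∑ j, (A i j : ℝ) * (x j - yA A c (θ t) j) = 0) := by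
  intro t ht
  set w : Fin m → ℝ := fun i => ∑ j, (A i j : ℝ) * (x j - yA A c (θ t) j) with hw
  have hθt : ∀ i, 0 < θ t i := hθpos t ht
  have hy : ∀ j, 0 < yA A c (θ t) j := fun j =>
    mul_pos (hc j) (Finset.prod_pos fun i _ => pow_pos (hθt i) _)
  have hθi : ∀ i, HasDerivAt (fun s => θ s i) (w i) t :=
    fun i => hasDerivAt_pi.mp (hode t ht) i
  -- derivative of each y_j along the trajectory
  have hg : ∀ j, HasDerivAt (fun s => yA A c (θ s) j)
      (yA A c (θ t) j * ∑ i, (A i j : ℝ) * w i / θ t i) t := by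
    intro j
    have h1 : HasDerivAt (fun s => ∏ i, θ s i ^ A i j)
        (∑ i, (∏ k ∈ Finset.univ.erase i, θ t k ^ A k j) •
          ((A i j : ℝ) * θ t i ^ (A i j - 1) * w i)) t :=
      HasDerivAt.fun_finsetProd (fun i _ => (hθi i).pow _)
    have h2 := h1.const_mul (c j)
    have heq : c j * ∑ i, (∏ k ∈ Finset.univ.erase i, θ t k ^ A k j) •
          ((A i j : ℝ) * θ t i ^ (A i j - 1) * w i)
        = yA A c (θ t) j * ∑ i, (A i j : ℝ) * w i / θ t i := by
      simp only [yA, smul_eq_mul, Finset.mul_sum, mul_assoc]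
      refine Finset.sum_congr rfl fun i _ => ?_
      rcases Nat.eq_zero_or_pos (A i j) with h0 | hpos
      · simp [h0]
      · have hprod : ∏ k, θ t k ^ A k j
            = θ t i ^ A i j * ∏ k ∈ Finset.univ.erase i, θ t k ^ A k j := by
          rw [← Finset.prod_erase_mul _ _ (Finset.mem_univ i), mul_comm]
        have hpow : θ t i ^ A i j = θ t i ^ (A i j - 1) * θ t i := by
          rw [← pow_succ, Nat.sub_add_cancel hpos]
        have hne : θ t i ≠ 0 := (hθt i).ne'
        rw [hprod, hpow]
        field_simp
    rw [heq] at h2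
    exact h2
  set S : Fin n → ℝ := fun j => ∑ i, (A i j : ℝ) * w i / θ t i with hS
  -- derivative of each summand of KL
  have hterm : ∀ j, HasDerivAt
      (fun s => x j * Real.log (x j / yA A c (θ s) j) - x j + yA A c (θ s) j)
      ((yA A c (θ t) j - x j) * S j) t := by
    intro j
    have hdiv : HasDerivAt (fun s => x j / yA A c (θ s) j)
        ((0 * yA A c (θ t) j - x j * (yA A c (θ t) j * S j)) / (yA A c (θ t) j)^2) t :=
      (hasDerivAt_const t (x j)).div (hg j) (hy j).ne'
    have hlog := hdiv.log (div_pos (hx j) (hy j)).ne'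
    have h3 := ((hlog.const_mul (x j)).sub_const (x j)).fun_add (hg j)
    convert h3 using 1
    · rfl
    · rfl
    have hgne : yA A c (θ t) j ≠ 0 := (hy j).ne'
    have hxne : x j ≠ 0 := (hx j).ne'
    field_simp
    ring
  have hsum := HasDerivAt.fun_sum (fun j (_ : j ∈ Finset.univ) => hterm j)
  have hdval : (∑ j, (yA A c (θ t) j - x j) * S j) = -∑ i, w i ^ 2 / θ t i := by
    have swap : (∑ j, (yA A c (θ t) j - x j) * S j)
        = ∑ i, ∑ j, (yA A c (θ t) j - x j) * ((A i j : ℝ) * w i / θ t i) := by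
      rw [Finset.sum_comm]
      exact Finset.sum_congr rfl fun j _ => by rw [hS, Finset.mul_sum]
    rw [swap, ← Finset.sum_neg_distrib]
    refine Finset.sum_congr rfl fun i _ => ?_
    have hw' : w i + ∑ j, (A i j : ℝ) * (yA A c (θ t) j - x j) = 0 := by
      have hwi : w i = ∑ j, (A i j : ℝ) * (x j - yA A c (θ t) j) := rfl
      rw [hwi, ← Finset.sum_add_distrib]
      exact Finset.sum_eq_zero fun j _ => by ring
    have hfac : ∑ j, (yA A c (θ t) j - x j) * ((A i j : ℝ) * w i / θ t i)
        = (w i / θ t i) * ∑ j, (A i j : ℝ) * (yA A c (θ t) j - x j) := by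
      rw [Finset.mul_sum]
      exact Finset.sum_congr rfl fun j _ => by ring
    have hwneg : ∑ j, (A i j : ℝ) * (yA A c (θ t) j - x j) = - w i := by linarith
    rw [hfac, hwneg]
    ring
  refine ⟨-∑ i, w i ^ 2 / θ t i, ?_, ?_, ?_⟩
  · rw [← hdval]
    exact hsum
  · simp only [neg_nonpos]
    exact Finset.sum_nonneg fun i _ => div_nonneg (sq_nonneg _) (hθt i).le
  · rw [neg_eq_zero]
    rw [Finset.sum_eq_zero_iff_of_nonneg (fun i _ => div_nonneg (sq_nonneg _) (hθt i).le)]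
    constructor
    · intro h i
      have h1 := h i (Finset.mem_univ i)
      rcases div_eq_zero_iff.mp h1 with h2 | h2
      · exact sq_eq_zero_iff.mp h2
      · exact absurd h2 (hθt i).ne'
    · intro h i _
      have : w i = 0 := by simpa [hw] using h i
      simp [this]
end

section
/- (M-projection scheme, convergence.) Let A = (a_{ij}) be an m×n matrix of nonnegative integers, c ∈ ℝ^n_{>0}, and define y_A(θ)_j := c_j Π_{i=1}^m θ_i^{a_{ij}} for θ ∈ ℝ^m_{≥0}. Fix x ∈ ℝ^n_{>0}, and let θ : [0,∞) → ℝ^m_{>0} be differentiable with θ̇(t) = A(x − y_A(θ(t))). Then θ̂ := lim_{t→∞} θ(t) exists in ℝ^m_{≥0}, and y_A(θ̂) is the M-projection of x to y_A(ℝ^m_{>0}): D(x‖y_A(θ̂)) ≤ D(x‖y_A(θ)) for every θ ∈ ℝ^m_{>0}. -/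
open Real Filter Set Topology

variable {m n : ℕ}

/-- `p = Aᵀ u` as a linear map. -/
def pA (A : Matrix (Fin m) (Fin n) ℕ) : (Fin m → ℝ) →ₗ[ℝ] (Fin n → ℝ) :=
  (Matrix.of fun j i => (A i j : ℝ)).mulVecLin

lemma pA_apply (A : Matrix (Fin m) (Fin n) ℕ) (v : Fin m → ℝ) (j : Fin n) :
    pA A v j = ∑ i, (A i j : ℝ) * v i := by
  simp [pA, Matrix.mulVecLin_apply, Matrix.mulVec, dotProduct]

/-- The convex potential `W(p) = ∑ⱼ (cⱼ e^{pⱼ} - xⱼ pⱼ)`. -/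
noncomputable def Wf (c x : Fin n → ℝ) (p : Fin n → ℝ) : ℝ :=
  ∑ j, (c j * Real.exp (p j) - x j * p j)

lemma Wf_continuous (c x : Fin n → ℝ) : Continuous (Wf c x) := by
  unfold Wf
  exact continuous_finset_sum _ fun j _ => by
    exact ((continuous_const.mul ((continuous_apply j).rexp)).sub
      (continuous_const.mul (continuous_apply j)))

def Pset (A : Matrix (Fin m) (Fin n) ℕ) : Set (Fin n → ℝ) := Set.range (pA A)

lemma Pset_closed (A : Matrix (Fin m) (Fin n) ℕ) : IsClosed (Pset A) := by
  have : Pset A = ↑(LinearMap.range (pA A)) := by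
    rw [LinearMap.coe_range]; rfl
  rw [this]
  exact Submodule.closed_of_finiteDimensional _

lemma zero_mem_Pset (A : Matrix (Fin m) (Fin n) ℕ) : (0 : Fin n → ℝ) ∈ Pset A :=
  ⟨0, map_zero _⟩

lemma pA_mem_Pset (A : Matrix (Fin m) (Fin n) ℕ) (v : Fin m → ℝ) :
    pA A v ∈ Pset A := ⟨v, rfl⟩



/-- The Bregman / relative-entropy integrand `g_a(s) = s log s - s log a - s + a`. -/
noncomputable def gterm (a s : ℝ) : ℝ := s * Real.log s - s * Real.log a - s + a

lemma gterm_self (a : ℝ) : gterm a a = 0 := by unfold gterm; ring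

lemma gterm_continuous (a : ℝ) : Continuous (gterm a) := by
  unfold gterm
  exact ((Real.continuous_mul_log.sub (continuous_id.mul continuous_const)).sub
    continuous_id).add continuous_const

lemma gterm_nonneg {a s : ℝ} (ha : 0 < a) (hs : 0 ≤ s) : 0 ≤ gterm a s := by
  rcases eq_or_lt_of_le hs with h | h
  · simp [gterm, ← h]; positivity
  · have hlog : Real.log (a / s) ≤ a / s - 1 := Real.log_le_sub_one_of_pos (by positivity)
    have hld : Real.log (a / s) = Real.log a - Real.log s := Real.log_div (ne_of_gt ha) (ne_of_gt h)
    rw [hld] at hlog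
    have := mul_le_mul_of_nonneg_left hlog (le_of_lt h)
    unfold gterm
    have hdiv : s * (a / s - 1) = a - s := by field_simp
    nlinarith

lemma gterm_pos {a s : ℝ} (ha : 0 < a) (hs : 0 ≤ s) (hne : s ≠ a) : 0 < gterm a s := by
  rcases eq_or_lt_of_le hs with h | h
  · simp [gterm, ← h]; positivity
  · have hne' : a / s ≠ 1 := by
      intro hcon
      exact hne (by field_simp at hcon; linarith)
    have hlog : Real.log (a / s) < a / s - 1 :=
      Real.log_lt_sub_one_of_pos (by positivity) hne'
    have hld : Real.log (a / s) = Real.log a - Real.log s := Real.log_div (ne_of_gt ha) (ne_of_gt h)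
    rw [hld] at hlog
    have := (mul_lt_mul_iff_right₀ h).mpr hlog
    unfold gterm
    have hdiv : s * (a / s - 1) = a - s := by field_simp
    nlinarith

lemma gterm_coercive {a s C : ℝ} (ha : 0 < a) (hs : 0 < s) (h : gterm a s ≤ C) :
    s ≤ max (a * Real.exp 2) C := by
  by_cases hle : s ≤ a * Real.exp 2
  · exact le_max_of_le_left hle
  · push_neg at hle
    have h2 : Real.log s ≥ Real.log a + 2 := by
      have : Real.log (a * Real.exp 2) ≤ Real.log s := Real.log_le_log (by positivity) hle.le
      rwa [Real.log_mul (ne_of_gt ha) (by positivity), Real.log_exp] at this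
    have : s ≤ C := by
      unfold gterm at h; nlinarith
    exact le_max_of_le_right this

/-- if `gterm a s` is small then `s` is close to `a`. -/
lemma gterm_small {a : ℝ} (ha : 0 < a) :
    ∀ ε > 0, ∃ δ > 0, ∀ s, 0 < s → gterm a s ≤ δ → |s - a| < ε := by
  intro ε hε
  set M : ℝ := max (a * Real.exp 2) 1 with hM
  have hM1 : (1:ℝ) ≤ M := le_max_right _ _
  set S : Set ℝ := Icc 0 M ∩ {s | ε ≤ |s - a|} with hS
  have hScomp : IsCompact S := (isCompact_Icc).inter_right (by
    have : {s : ℝ | ε ≤ |s - a|} = (fun s => |s - a|) ⁻¹' Ici ε := rfl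
    rw [this]
    exact isClosed_Ici.preimage (by continuity))
  by_cases hne : S.Nonempty
  · obtain ⟨s₀, hs₀S, hmin⟩ := hScomp.exists_isMinOn hne ((gterm_continuous a).continuousOn)
    have hs₀pos : 0 < gterm a s₀ := by
      apply gterm_pos ha hs₀S.1.1
      intro hcon
      have := hs₀S.2
      rw [hcon] at this; simp at this; linarith
    refine ⟨min (gterm a s₀ / 2) 1, by positivity, fun s hspos hsle => ?_⟩
    have hsle1 : gterm a s ≤ 1 := le_trans hsle (min_le_right _ _)
    have hsM : s ≤ M := by
      have := gterm_coercive ha hspos hsle1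
      calc s ≤ max (a * Real.exp 2) 1 := by
              rcases le_max_iff.mp this with h | h
              · exact le_max_of_le_left h
              · exact le_trans h (le_max_right _ _)
           _ = M := rfl
    by_contra hcon
    push_neg at hcon
    have hmem : s ∈ S := ⟨⟨hspos.le, hsM⟩, hcon⟩
    have := hmin hmem
    have h2 : gterm a s ≤ gterm a s₀ / 2 := le_trans hsle (min_le_left _ _)
    simp only [IsMinOn, IsMinFilter] at this
    have h3 : gterm a s₀ ≤ gterm a s := hmin hmem
    linarith
  · refine ⟨1, one_pos, fun s hspos hsle => ?_⟩
    have hsM : s ≤ M := by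
      have := gterm_coercive ha hspos hsle
      rcases le_max_iff.mp this with h | h
      · exact le_max_of_le_left h
      · exact le_trans h hM1
    by_contra hcon
    push_neg at hcon
    exact hne ⟨s, ⟨hspos.le, hsM⟩, hcon⟩




lemma hterm_lower {cc xx : ℝ} (hc : 0 < cc) (hx : 0 < xx) (s : ℝ) :
    xx - xx * (Real.log xx - Real.log cc) ≤ cc * Real.exp s - xx * s := by
  set s₀ : ℝ := Real.log xx - Real.log cc with hs₀
  have h1 : Real.exp s₀ = xx / cc := by
    rw [hs₀, Real.exp_sub, Real.exp_log hx, Real.exp_log hc]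
  have h2 : Real.exp s = Real.exp s₀ * Real.exp (s - s₀) := by
    rw [← Real.exp_add]; ring_nf
  have h3 := Real.add_one_le_exp (s - s₀)
  have h4 : cc * Real.exp s₀ = xx := by rw [h1]; field_simp
  have h5 : cc * Real.exp s = xx * Real.exp (s - s₀) := by rw [h2, ← mul_assoc, h4]
  nlinarith [Real.exp_pos (s - s₀)]

lemma hterm_coercive {cc xx : ℝ} (hc : 0 < cc) (hx : 0 < xx) (C : ℝ) :
    ∃ R : ℝ, ∀ s, cc * Real.exp s - xx * s ≤ C → |s| ≤ R := by
  refine ⟨max (|C| / xx) (max 1 (4 * (xx + |C| + cc) / cc)), fun s hs => ?_⟩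
  rcases le_or_gt s 0 with hneg | hpos
  · have h1 : xx * (-s) ≤ C := by nlinarith [Real.exp_pos s]
    have h2 : -s ≤ |C| / xx := by
      rw [le_div_iff₀ hx]
      calc -s * xx = xx * (-s) := by ring
        _ ≤ C := h1
        _ ≤ |C| := le_abs_self C
    rw [abs_of_nonpos hneg]
    exact le_max_of_le_left h2
  · rw [abs_of_pos hpos]
    by_contra hcon
    push_neg at hcon
    have hs1 : 1 ≤ s := le_trans (le_max_left _ _) (le_trans (le_max_right _ _) hcon.le)
    have hs2 : 4 * (xx + |C| + cc) / cc ≤ s :=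
      le_trans (le_max_right _ _) (le_trans (le_max_right _ _) hcon.le)
    have hs3 : 4 * (xx + |C| + cc) ≤ cc * s := by
      rw [div_le_iff₀ hc] at hs2; linarith [hs2]
    -- exp s ≥ 1 + s + s^2/4
    have he : 1 + s / 2 ≤ Real.exp (s / 2) := by linarith [Real.add_one_le_exp (s / 2)]
    have he2 : (1 + s / 2) ^ 2 ≤ Real.exp s := by
      have hh : Real.exp (s/2) ^ 2 = Real.exp (s/2) * Real.exp (s/2) := sq (Real.exp (s/2)) ▸ by ring
      have : Real.exp s = Real.exp (s / 2) ^ 2 := by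
        rw [hh, ← Real.exp_add, add_halves]
      rw [this, hh]
      have h0 : (0:ℝ) ≤ 1 + s / 2 := by linarith
      nlinarith [he]
    have hCabs : C ≤ |C| := le_abs_self C
    nlinarith [hs3, he2, hs1, mul_pos hc hpos, mul_le_mul_of_nonneg_right hs3 (le_of_lt hpos), abs_nonneg C, hc.le]

lemma Wf_term_le {c x : Fin n → ℝ} (hc : ∀ j, 0 < c j) (hx : ∀ j, 0 < x j)
    {p : Fin n → ℝ} {C : ℝ} (h : Wf c x p ≤ C) (j : Fin n) :
    c j * Real.exp (p j) - x j * p j ≤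
      C - ∑ k, (x k - x k * (Real.log (x k) - Real.log (c k)))
        + (x j - x j * (Real.log (x j) - Real.log (c j))) := by
  have hsplit : Wf c x p = (c j * Real.exp (p j) - x j * p j) +
      ∑ k ∈ Finset.univ.erase j, (c k * Real.exp (p k) - x k * p k) := by
    rw [Wf, ← Finset.add_sum_erase _ _ (Finset.mem_univ j)]
  have hlow : ∑ k ∈ Finset.univ.erase j, (x k - x k * (Real.log (x k) - Real.log (c k)))
      ≤ ∑ k ∈ Finset.univ.erase j, (c k * Real.exp (p k) - x k * p k) :=
    Finset.sum_le_sum fun k _ => hterm_lower (hc k) (hx k) (p k)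
  have hsum : ∑ k, (x k - x k * (Real.log (x k) - Real.log (c k)))
      = (x j - x j * (Real.log (x j) - Real.log (c j))) +
        ∑ k ∈ Finset.univ.erase j, (x k - x k * (Real.log (x k) - Real.log (c k))) := by
    rw [← Finset.add_sum_erase _ _ (Finset.mem_univ j)]
  linarith [hsplit ▸ h]

lemma Wf_sublevel_bounded {c x : Fin n → ℝ} (hc : ∀ j, 0 < c j) (hx : ∀ j, 0 < x j)
    (C : ℝ) : ∃ R : Fin n → ℝ, ∀ p, Wf c x p ≤ C → ∀ j, |p j| ≤ R j := by
  have key : ∀ j : Fin n, ∃ R : ℝ, ∀ s, c j * Real.exp s - x j * s ≤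
      C - ∑ k, (x k - x k * (Real.log (x k) - Real.log (c k)))
        + (x j - x j * (Real.log (x j) - Real.log (c j))) → |s| ≤ R :=
    fun j => hterm_coercive (hc j) (hx j) _
  choose R hR using key
  exact ⟨R, fun p hp j => hR j (p j) (Wf_term_le hc hx hp j)⟩

lemma Wf_exists_min {c x : Fin n → ℝ} (hc : ∀ j, 0 < c j) (hx : ∀ j, 0 < x j)
    (P : Set (Fin n → ℝ)) (hPc : IsClosed P) (hP0 : (0 : Fin n → ℝ) ∈ P) :
    ∃ pstar ∈ P, ∀ p ∈ P, Wf c x pstar ≤ Wf c x p := by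
  obtain ⟨R, hR⟩ := Wf_sublevel_bounded hc hx (Wf c x 0)
  set S : Set (Fin n → ℝ) := P ∩ {p | Wf c x p ≤ Wf c x 0} with hS
  have hWcont : Continuous (Wf c x) := by
    unfold Wf
    exact continuous_finset_sum _ fun j _ =>
      ((continuous_const.mul ((continuous_apply j).rexp)).sub
        (continuous_const.mul (continuous_apply j)))
  have hSclosed : IsClosed S := hPc.inter (isClosed_le hWcont continuous_const)
  have hSsub : S ⊆ Set.pi Set.univ (fun j => Icc (-(R j)) (R j)) := by
    intro p hp j _
    have := hR p hp.2 j
    exact ⟨neg_le_of_abs_le this, le_of_abs_le this⟩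
  have hScomp : IsCompact S := by
    apply (isCompact_univ_pi (fun j => isCompact_Icc)).of_isClosed_subset hSclosed hSsub
  obtain ⟨pstar, hpstarS, hmin⟩ := hScomp.exists_isMinOn ⟨0, hP0, by simp⟩
    hWcont.continuousOn
  refine ⟨pstar, hpstarS.1, fun p hp => ?_⟩
  by_cases hple : Wf c x p ≤ Wf c x 0
  · exact hmin ⟨hp, hple⟩
  · push_neg at hple
    exact le_trans (hmin (show (0: Fin n → ℝ) ∈ S from ⟨hP0, by simp⟩)) hple.le

lemma yA_exp {m n : ℕ} (A : Matrix (Fin m) (Fin n) ℕ) (c : Fin n → ℝ)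
    {v : Fin m → ℝ} (hv : ∀ i, 0 < v i) (j : Fin n) :
    yA A c v j = c j * Real.exp (pA A (fun i => Real.log (v i)) j) := by
  rw [yA, pA_apply, Real.exp_sum]
  congr 1
  apply Finset.prod_congr rfl
  intro i _
  rw [Real.exp_nat_mul, Real.exp_log (hv i)]

lemma key_j {cc : ℝ} (hcc : 0 < cc) (xx p q : ℝ) :
    (xx - cc * Real.exp p) * (p - q) ≤
      (cc * Real.exp q - xx * q) - (cc * Real.exp p - xx * p) := by
  have h : Real.exp q = Real.exp p * Real.exp (q - p) := by
    rw [← Real.exp_add]; ring_nf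
  nlinarith [Real.add_one_le_exp (q - p), Real.exp_pos p,
    mul_pos hcc (Real.exp_pos p),
    mul_le_mul_of_nonneg_left (Real.add_one_le_exp (q - p))
      (le_of_lt (mul_pos hcc (Real.exp_pos p)))]

lemma Dexpr_le {m n : ℕ} (A : Matrix (Fin m) (Fin n) ℕ) {c x : Fin n → ℝ}
    (hc : ∀ j, 0 < c j)
    {v θa : Fin m → ℝ} (hv : ∀ i, 0 < v i) (hθa : ∀ i, 0 < θa i) :
    ∑ i, (Real.log (v i) - Real.log (θa i)) * (∑ j, (A i j : ℝ) * (x j - yA A c v j))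
      ≤ Wf c x (pA A (fun i => Real.log (θa i))) - Wf c x (pA A (fun i => Real.log (v i))) := by
  set p : Fin n → ℝ := pA A (fun i => Real.log (v i)) with hp
  set q : Fin n → ℝ := pA A (fun i => Real.log (θa i)) with hq
  have hswap : ∑ i, (Real.log (v i) - Real.log (θa i)) * (∑ j, (A i j : ℝ) * (x j - yA A c v j))
      = ∑ j, (x j - c j * Real.exp (p j)) * (p j - q j) := by
    have h1 : ∀ i, (Real.log (v i) - Real.log (θa i)) * (∑ j, (A i j : ℝ) * (x j - yA A c v j))
        = ∑ j, (Real.log (v i) - Real.log (θa i)) * ((A i j : ℝ) * (x j - yA A c v j)) := by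
      intro i; rw [Finset.mul_sum]
    rw [Finset.sum_congr rfl (fun i _ => h1 i), Finset.sum_comm]
    apply Finset.sum_congr rfl
    intro j _
    rw [yA_exp A c hv j, hp, hq, pA_apply, pA_apply, ← Finset.sum_sub_distrib, Finset.mul_sum]
    apply Finset.sum_congr rfl
    intro i _
    ring
  rw [hswap]
  have hWd : Wf c x q - Wf c x p
      = ∑ j, ((c j * Real.exp (q j) - x j * q j) - (c j * Real.exp (p j) - x j * p j)) := by
    rw [Wf, Wf, ← Finset.sum_sub_distrib]
  rw [hWd]
  exact Finset.sum_le_sum fun j _ => key_j (hc j) (x j) (p j) (q j)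

lemma gterm_hasDerivAt {a s : ℝ} (hs : s ≠ 0) :
    HasDerivAt (gterm a) (Real.log s - Real.log a) s := by
  have h1 : HasDerivAt (fun y : ℝ => y * Real.log y) (1 * Real.log s + s * s⁻¹) s :=
    (hasDerivAt_id s).mul (Real.hasDerivAt_log hs)
  have h2 := ((h1.sub ((hasDerivAt_id s).mul_const (Real.log a))).sub (hasDerivAt_id s)).add_const a
  have : (1 * Real.log s + s * s⁻¹ - 1 * Real.log a - 1) = Real.log s - Real.log a := by
    rw [mul_inv_cancel₀ hs]; ring
  rw [this] at h2
  exact h2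

noncomputable def Bfun {m : ℕ} (θa : Fin m → ℝ) (θ : ℝ → Fin m → ℝ) (t : ℝ) : ℝ :=
  ∑ i, gterm (θa i) (θ t i)

noncomputable def Dexpr {m n : ℕ} (A : Matrix (Fin m) (Fin n) ℕ) (c x : Fin n → ℝ)
    (θa : Fin m → ℝ) (θ : ℝ → Fin m → ℝ) (t : ℝ) : ℝ :=
  ∑ i, (Real.log (θ t i) - Real.log (θa i)) * (∑ j, (A i j : ℝ) * (x j - yA A c (θ t) j))

section Flow

variable {m n : ℕ} {A : Matrix (Fin m) (Fin n) ℕ} {c x : Fin n → ℝ}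
  {θ : ℝ → Fin m → ℝ}
  (hc : ∀ j, 0 < c j) (hx : ∀ j, 0 < x j)
  (hθpos : ∀ t, 0 ≤ t → ∀ i, 0 < θ t i)
  (hode : ∀ t, 0 ≤ t → HasDerivAt θ
      (fun i => ∑ j, (A i j : ℝ) * (x j - yA A c (θ t) j)) t)

include hθpos hode in
lemma Bfun_hasDerivAt {θa : Fin m → ℝ} {t : ℝ} (ht : 0 ≤ t) :
    HasDerivAt (Bfun θa θ) (Dexpr A c x θa θ t) t := by
  have hcomp : ∀ i, HasDerivAt (fun s => θ s i)
      (∑ j, (A i j : ℝ) * (x j - yA A c (θ t) j)) t :=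
    fun i => hasDerivAt_pi.mp (hode t ht) i
  have hterm : ∀ i : Fin m, HasDerivAt (fun s => gterm (θa i) (θ s i))
      ((Real.log (θ t i) - Real.log (θa i)) * (∑ j, (A i j : ℝ) * (x j - yA A c (θ t) j))) t :=
    fun i => by have := (gterm_hasDerivAt (a := θa i) (ne_of_gt (hθpos t ht i))).comp t (hcomp i); exact this
  exact HasDerivAt.fun_sum fun i _ => hterm i

include hθpos in
lemma Bfun_nonneg {θa : Fin m → ℝ} (hθa : ∀ i, 0 < θa i) {t : ℝ} (ht : 0 ≤ t) :
    0 ≤ Bfun θa θ t :=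
  Finset.sum_nonneg fun i _ => gterm_nonneg (hθa i) (hθpos t ht i).le

include hθpos in
lemma Bfun_term_le {θa : Fin m → ℝ} (hθa : ∀ i, 0 < θa i) {t : ℝ} (ht : 0 ≤ t) (i : Fin m) :
    gterm (θa i) (θ t i) ≤ Bfun θa θ t :=
  Finset.single_le_sum (fun k _ => gterm_nonneg (hθa k) (hθpos t ht k).le) (Finset.mem_univ i)

include hc hθpos in
lemma Dexpr_nonpos {θa : Fin m → ℝ} (hθa : ∀ i, 0 < θa i)
    (hmin : ∀ p ∈ Pset A, Wf c x (pA A (fun i => Real.log (θa i))) ≤ Wf c x p)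
    {t : ℝ} (ht : 0 ≤ t) : Dexpr A c x θa θ t ≤ 0 := by
  have h1 := Dexpr_le A hc (hθpos t ht) hθa (x := x)
  have h2 := hmin _ (pA_mem_Pset A (fun i => Real.log (θ t i)))
  unfold Dexpr
  linarith

include hc hθpos hode in
lemma Bfun_antitone {θa : Fin m → ℝ} (hθa : ∀ i, 0 < θa i)
    (hmin : ∀ p ∈ Pset A, Wf c x (pA A (fun i => Real.log (θa i))) ≤ Wf c x p) :
    AntitoneOn (Bfun θa θ) (Ici 0) := by
  apply antitoneOn_of_deriv_nonpos (convex_Ici 0)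
  · exact fun t ht => (Bfun_hasDerivAt hθpos hode ht).continuousAt.continuousWithinAt
  · rw [interior_Ici]
    exact fun t ht => (Bfun_hasDerivAt hθpos hode (le_of_lt ht)).differentiableAt.differentiableWithinAt
  · rw [interior_Ici]
    intro t ht
    rw [(Bfun_hasDerivAt hθpos hode (le_of_lt ht)).deriv]
    exact Dexpr_nonpos hc hθpos hθa hmin (le_of_lt ht)

end Flow

lemma KL_eq {m n : ℕ} (A : Matrix (Fin m) (Fin n) ℕ) {c x : Fin n → ℝ}
    (hc : ∀ j, 0 < c j) (hx : ∀ j, 0 < x j) {v : Fin m → ℝ} (hv : ∀ i, 0 < v i) :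
    KL x (yA A c v) = (∑ j, (x j * Real.log (x j) - x j * Real.log (c j) - x j))
      + Wf c x (pA A (fun i => Real.log (v i))) := by
  set p : Fin n → ℝ := pA A (fun i => Real.log (v i)) with hp
  have hterm : ∀ j, x j * Real.log (x j / yA A c v j) - x j + yA A c v j
      = (x j * Real.log (x j) - x j * Real.log (c j) - x j)
        + (c j * Real.exp (p j) - x j * p j) := by
    intro j
    rw [yA_exp A c hv j]
    have hcy : (0:ℝ) < c j * Real.exp (p j) := mul_pos (hc j) (Real.exp_pos _)
    rw [Real.log_div (ne_of_gt (hx j)) (ne_of_gt hcy),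
      Real.log_mul (ne_of_gt (hc j)) (ne_of_gt (Real.exp_pos _)), Real.log_exp]
    ring
  rw [KL]
  rw [Finset.sum_congr rfl (fun j _ => hterm j), Finset.sum_add_distrib]
  rfl

lemma row_const {m n : ℕ} {A : Matrix (Fin m) (Fin n) ℕ} {c x : Fin n → ℝ}
    {θ : ℝ → Fin m → ℝ}
    (hode : ∀ t, 0 ≤ t → HasDerivAt θ
      (fun i => ∑ j, (A i j : ℝ) * (x j - yA A c (θ t) j)) t)
    (i : Fin m) (hrow : ∀ j, A i j = 0) :
    ∀ t, 0 ≤ t → θ t i = θ 0 i := by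
  have hderiv : ∀ s, 0 ≤ s → HasDerivAt (fun r => θ r i) 0 s := by
    intro s hs
    have h := hasDerivAt_pi.mp (hode s hs) i
    simpa [hrow] using h
  have hcont : ContinuousOn (fun r => θ r i) (Ici 0) :=
    fun s hs => (hderiv s hs).continuousAt.continuousWithinAt
  have hdiff : DifferentiableOn ℝ (fun r => θ r i) (interior (Ici (0:ℝ))) := by
    rw [interior_Ici]
    exact fun s hs => (hderiv s hs.le).differentiableAt.differentiableWithinAt
  have hderiv0 : ∀ s ∈ interior (Ici (0:ℝ)), deriv (fun r => θ r i) s = 0 := by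
    rw [interior_Ici]
    exact fun s hs => (hderiv s hs.le).deriv
  have hm : MonotoneOn (fun r => θ r i) (Ici 0) :=
    monotoneOn_of_deriv_nonneg (convex_Ici 0) hcont hdiff
      (fun s hs => le_of_eq (hderiv0 s hs).symm)
  have ha : AntitoneOn (fun r => θ r i) (Ici 0) :=
    antitoneOn_of_deriv_nonpos (convex_Ici 0) hcont hdiff
      (fun s hs => le_of_eq (hderiv0 s hs))
  intro t ht
  exact le_antisymm (ha self_mem_Ici ht ht) (hm self_mem_Ici ht ht)

/-- M-projection scheme, convergence: a trajectory of
`θ̇ = A(x − y_A(θ))` converges to some `θ̂ ∈ ℝ^m_{≥0}`, and `y_A(θ̂)` is the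
M-projection of `x` to `y_A(ℝ^m_{>0})`. -/
theorem mprojection_converges
    {m n : ℕ} (A : Matrix (Fin m) (Fin n) ℕ) (c : Fin n → ℝ)
    (hc : ∀ j, 0 < c j)
    (x : Fin n → ℝ) (hx : ∀ j, 0 < x j)
    (θ : ℝ → Fin m → ℝ)
    (hθpos : ∀ t, 0 ≤ t → ∀ i, 0 < θ t i)
    (hode : ∀ t, 0 ≤ t → HasDerivAt θ
      (fun i => ∑ j, (A i j : ℝ) * (x j - yA A c (θ t) j)) t) :
    ∃ θhat : Fin m → ℝ,
      (∀ i, 0 ≤ θhat i) ∧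
      Filter.Tendsto θ Filter.atTop (nhds θhat) ∧
      ∀ θ' : Fin m → ℝ, (∀ i, 0 < θ' i) →
        KL x (yA A c θhat) ≤ KL x (yA A c θ') := by
  classical
  set pfun : ℝ → Fin n → ℝ := fun t => pA A (fun i => Real.log (θ t i)) with hpfun
  -- global minimizer of W over P
  obtain ⟨pstar, hpstarP, hpstarmin⟩ :=
    Wf_exists_min hc hx (Pset A) (Pset_closed A) (zero_mem_Pset A)
  obtain ⟨ustar, hustar⟩ := hpstarP
  set θstar : Fin m → ℝ := fun i => Real.exp (ustar i) with hθstar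
  have hθstarpos : ∀ i, 0 < θstar i := fun i => Real.exp_pos _
  have hlogθstar : (fun i => Real.log (θstar i)) = ustar := by
    funext i; exact Real.log_exp _
  have hWstareq : Wf c x (pA A (fun i => Real.log (θstar i))) = Wf c x pstar := by
    rw [hlogθstar, hustar]
  have hminstar : ∀ p ∈ Pset A, Wf c x (pA A (fun i => Real.log (θstar i))) ≤ Wf c x p := by
    intro p hp; rw [hWstareq]; exact hpstarmin p hp
  set B : ℝ → ℝ := Bfun θstar θ with hB
  have hBanti : AntitoneOn B (Ici 0) := Bfun_antitone hc hθpos hode hθstarpos hminstar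
  have hBnonneg : ∀ t, 0 ≤ t → 0 ≤ B t := fun t ht => Bfun_nonneg hθpos hθstarpos ht
  -- mean value theorem on [k, k+1]
  have hMVT : ∀ k : ℕ, ∃ ξ ∈ Set.Ioo (k:ℝ) ((k:ℝ)+1),
      Dexpr A c x θstar θ ξ = (B ((k:ℝ)+1) - B (k:ℝ)) / (((k:ℝ)+1) - (k:ℝ)) := by
    intro k
    apply exists_hasDerivAt_eq_slope B (fun t => Dexpr A c x θstar θ t)
      (by linarith : (k:ℝ) < (k:ℝ)+1)
    · exact fun t ht =>
        (Bfun_hasDerivAt hθpos hode (le_trans (Nat.cast_nonneg k) ht.1)).continuousAt.continuousWithinAt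
    · exact fun t ht => Bfun_hasDerivAt hθpos hode (le_trans (Nat.cast_nonneg k) ht.1.le)
  choose ξ hξIoo hξslope using hMVT
  have hξpos : ∀ k, (0:ℝ) ≤ ξ k := fun k => le_trans (Nat.cast_nonneg k) (hξIoo k).1.le
  set Wstar : ℝ := Wf c x pstar with hWstar
  have hWlow : ∀ k, Wstar ≤ Wf c x (pfun (ξ k)) := fun k =>
    hpstarmin _ (pA_mem_Pset A _)
  have hWup : ∀ k : ℕ, Wf c x (pfun (ξ k)) ≤ Wstar + (B (k:ℝ) - B ((k:ℝ)+1)) := by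
    intro k
    have h1 : Dexpr A c x θstar θ (ξ k) ≤
        Wf c x (pA A (fun i => Real.log (θstar i))) - Wf c x (pfun (ξ k)) :=
      Dexpr_le A hc (hθpos _ (hξpos k)) hθstarpos (x := x)
    have h2 := hξslope k
    have hden : (((k:ℝ)+1) - (k:ℝ)) = 1 := by ring
    rw [hden, div_one] at h2
    rw [hWstareq] at h1
    linarith
  -- B along integers converges, so increments tend to 0
  set b : ℕ → ℝ := fun k => B (k:ℝ) with hb
  have hbanti : Antitone b := fun a bb hab =>
    hBanti (mem_Ici.mpr (Nat.cast_nonneg a)) (mem_Ici.mpr (Nat.cast_nonneg bb))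
      (Nat.cast_le.mpr hab)
  obtain ⟨L, hL⟩ : ∃ L, Tendsto b atTop (𝓝 L) := by
    rcases tendsto_of_antitone hbanti with h | h
    · exfalso
      obtain ⟨k, hk⟩ := (h.eventually (eventually_le_atBot (-1))).exists
      have := hBnonneg (k:ℝ) (Nat.cast_nonneg k)
      simp only [hb] at hk
      linarith
    · exact h
  have hdiff0 : Tendsto (fun k : ℕ => B (k:ℝ) - B ((k:ℝ)+1)) atTop (𝓝 0) := by
    have h2 : Tendsto (fun k : ℕ => b (k+1)) atTop (𝓝 L) := hL.comp (tendsto_add_atTop_nat 1)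
    have h3 := hL.sub h2
    rw [sub_self] at h3
    have heq : (fun k : ℕ => B (k:ℝ) - B ((k:ℝ)+1)) = fun k : ℕ => b k - b (k+1) := by
      funext k
      simp only [hb, Nat.cast_add, Nat.cast_one]
    rw [heq]
    exact h3
  have hWtends : Tendsto (fun k : ℕ => Wf c x (pfun (ξ k))) atTop (𝓝 Wstar) := by
    have hup : Tendsto (fun k : ℕ => Wstar + (B (k:ℝ) - B ((k:ℝ)+1))) atTop (𝓝 Wstar) := by
      have := tendsto_const_nhds.add hdiff0 (α := ℕ) (f := fun _ : ℕ => Wstar)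
      simpa using this
    exact tendsto_of_tendsto_of_tendsto_of_le_of_le tendsto_const_nhds hup hWlow hWup
  -- uniform bounds along ξ
  have hBle : ∀ k, B (ξ k) ≤ B 0 := fun k => hBanti self_mem_Ici (hξpos k) (hξpos k)
  set Mi : Fin m → ℝ := fun i => max (θstar i * Real.exp 2) (B 0) with hMi
  have hθbound : ∀ k i, θ (ξ k) i ≤ Mi i := by
    intro k i
    have h1 : gterm (θstar i) (θ (ξ k) i) ≤ B (ξ k) :=
      Bfun_term_le hθpos hθstarpos (hξpos k) i
    exact gterm_coercive (hθstarpos i) (hθpos _ (hξpos k) i) (le_trans h1 (hBle k))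
  have hWbnd : ∀ k, Wf c x (pfun (ξ k)) ≤ Wstar + B 0 := by
    intro k
    have h1 := hWup k
    have h2 := hBnonneg ((k:ℝ)+1) (by positivity)
    have h3 := hBanti self_mem_Ici (mem_Ici.mpr (Nat.cast_nonneg k)) (Nat.cast_nonneg k)
    linarith
  obtain ⟨R, hR⟩ := Wf_sublevel_bounded hc hx (Wstar + B 0)
  -- compactness: extract convergent subsequence of (θ (ξ k), pfun (ξ k))
  set K : Set ((Fin m → ℝ) × (Fin n → ℝ)) :=
    (Set.pi Set.univ fun i => Icc 0 (Mi i)) ×ˢ (Set.pi Set.univ fun j => Icc (-(R j)) (R j))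
    with hK
  have hKcomp : IsCompact K :=
    (isCompact_univ_pi fun i => isCompact_Icc).prod (isCompact_univ_pi fun j => isCompact_Icc)
  have hmem : ∀ k : ℕ, ((θ (ξ k), pfun (ξ k)) : (Fin m → ℝ) × (Fin n → ℝ)) ∈ K := by
    intro k
    constructor
    · intro i _
      exact ⟨(hθpos _ (hξpos k) i).le, hθbound k i⟩
    · intro j _
      have := hR _ (hWbnd k) j
      exact ⟨neg_le_of_abs_le this, le_of_abs_le this⟩
  obtain ⟨⟨θinf, pinf⟩, hzK, φ, hφmono, hφtend⟩ := hKcomp.tendsto_subseq hmem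
  have hθtend : Tendsto (fun k => θ (ξ (φ k))) atTop (𝓝 θinf) :=
    (continuous_fst.tendsto _).comp hφtend
  have hptend : Tendsto (fun k => pfun (ξ (φ k))) atTop (𝓝 pinf) :=
    (continuous_snd.tendsto _).comp hφtend
  -- positivity of the limit point
  have hθinfnonneg : ∀ i, 0 ≤ θinf i := fun i => (hzK.1 i (Set.mem_univ i)).1
  have hθinfpos : ∀ i, 0 < θinf i := by
    intro i
    by_cases hrow : ∀ j, A i j = 0
    · -- coordinate is constant along the flow
      have hconst : ∀ k : ℕ, θ (ξ (φ k)) i = θ 0 i :=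
        fun k => row_const hode i hrow _ (hξpos (φ k))
      have h1 : Tendsto (fun k : ℕ => θ (ξ (φ k)) i) atTop (𝓝 (θinf i)) :=
        tendsto_pi_nhds.mp hθtend i
      have h2 : Tendsto (fun k : ℕ => θ (ξ (φ k)) i) atTop (𝓝 (θ 0 i)) := by
        simp only [hconst]; exact tendsto_const_nhds
      rw [tendsto_nhds_unique h1 h2]
      exact hθpos 0 le_rfl i
    · push_neg at hrow
      obtain ⟨j, hj⟩ := hrow
      by_contra hle
      have hθinf0 : θinf i = 0 := le_antisymm (not_lt.mp hle) (hθinfnonneg i)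
      have hcoordt : Tendsto (fun k : ℕ => θ (ξ (φ k)) i) atTop (𝓝 0) := by
        have := tendsto_pi_nhds.mp hθtend i
        rwa [hθinf0] at this
      have hIoi : Tendsto (fun k : ℕ => θ (ξ (φ k)) i) atTop (𝓝[>] 0) := by
        rw [tendsto_nhdsWithin_iff]
        exact ⟨hcoordt, Filter.Eventually.of_forall fun k => hθpos _ (hξpos (φ k)) i⟩
      have hlogtend : Tendsto (fun k : ℕ => Real.log (θ (ξ (φ k)) i)) atTop atBot :=
        Real.tendsto_log_nhdsGT_zero.comp hIoi
      set Cbig : ℝ := ∑ i', (A i' j : ℝ) * max 0 (Real.log (Mi i')) with hCbig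
      -- eventually log θ_i ≤ 0
      have hev : ∀ᶠ k : ℕ in atTop, Real.log (θ (ξ (φ k)) i) ≤ 0 :=
        hlogtend.eventually (eventually_le_atBot 0)
      have hkey : ∀ᶠ k : ℕ in atTop,
          pfun (ξ (φ k)) j ≤ Cbig + Real.log (θ (ξ (φ k)) i) := by
        filter_upwards [hev] with k hk
        have hsum : pfun (ξ (φ k)) j = ∑ i', (A i' j : ℝ) * Real.log (θ (ξ (φ k)) i') :=
          pA_apply A _ j
        rw [hsum, hCbig]
        have hterm : ∀ i' ∈ Finset.univ, (A i' j : ℝ) * Real.log (θ (ξ (φ k)) i')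
            ≤ (A i' j : ℝ) * max 0 (Real.log (Mi i'))
              + (if i' = i then Real.log (θ (ξ (φ k)) i) else 0) := by
          intro i' _
          by_cases hii : i' = i
          · subst hii
            simp only [eq_self_iff_true, if_true]
            have ha1 : (1:ℝ) ≤ (A i' j : ℝ) := by
              have : 1 ≤ A i' j := Nat.one_le_iff_ne_zero.mpr hj
              exact_mod_cast this
            have hmax : 0 ≤ (A i' j : ℝ) * max 0 (Real.log (Mi i')) :=
              mul_nonneg (by positivity) (le_max_left _ _)
            nlinarith [mul_nonneg (sub_nonneg.mpr ha1) (neg_nonneg.mpr hk)]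
          · simp only [if_neg hii, add_zero]
            apply mul_le_mul_of_nonneg_left _ (by positivity)
            have hlog1 : Real.log (θ (ξ (φ k)) i') ≤ Real.log (Mi i') :=
              Real.log_le_log (hθpos _ (hξpos (φ k)) i') (hθbound (φ k) i')
            exact le_trans hlog1 (le_max_right _ _)
        have hsumle := Finset.sum_le_sum hterm
        have hsplit : ∑ i', ((A i' j : ℝ) * max 0 (Real.log (Mi i'))
              + (if i' = i then Real.log (θ (ξ (φ k)) i) else 0))
            = (∑ i', (A i' j : ℝ) * max 0 (Real.log (Mi i')))
              + Real.log (θ (ξ (φ k)) i) := by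
          rw [Finset.sum_add_distrib]
          congr 1
          simp
        rw [hsplit] at hsumle
        exact hsumle
      have habs : Tendsto (fun k : ℕ => Cbig + Real.log (θ (ξ (φ k)) i)) atTop atBot :=
        tendsto_atBot_add_const_left _ Cbig hlogtend
      have hbad : Tendsto (fun k : ℕ => pfun (ξ (φ k)) j) atTop atBot :=
        tendsto_atBot_mono' atTop hkey habs
      have hpj : Tendsto (fun k : ℕ => pfun (ξ (φ k)) j) atTop (𝓝 (pinf j)) :=
        tendsto_pi_nhds.mp hptend j
      exact (not_tendsto_atBot_of_tendsto_nhds hpj) hbad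
  -- identify pinf
  have hlogcont : Tendsto (fun k : ℕ => (fun i => Real.log (θ (ξ (φ k)) i)))
      atTop (𝓝 (fun i => Real.log (θinf i))) := by
    rw [tendsto_pi_nhds]
    intro i
    exact ((Real.continuousAt_log (ne_of_gt (hθinfpos i))).tendsto).comp
      (tendsto_pi_nhds.mp hθtend i)
  have hpinf_eq : pinf = pA A (fun i => Real.log (θinf i)) := by
    have h1 : Tendsto (fun k : ℕ => pfun (ξ (φ k))) atTop
        (𝓝 (pA A (fun i => Real.log (θinf i)))) :=
      (((pA A).continuous_of_finiteDimensional).tendsto _).comp hlogcont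
    exact tendsto_nhds_unique hptend h1
  have hWpinf : Wf c x pinf = Wstar := by
    have h1 : Tendsto (fun k : ℕ => Wf c x (pfun (ξ (φ k)))) atTop (𝓝 (Wf c x pinf)) :=
      ((Wf_continuous c x).tendsto _).comp hptend
    have h2 : Tendsto (fun k : ℕ => Wf c x (pfun (ξ (φ k)))) atTop (𝓝 Wstar) :=
      hWtends.comp hφmono.tendsto_atTop
    exact tendsto_nhds_unique h1 h2
  have hmininf : ∀ p ∈ Pset A, Wf c x (pA A (fun i => Real.log (θinf i))) ≤ Wf c x p := by
    intro p hp
    rw [← hpinf_eq, hWpinf]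
    exact hpstarmin p hp
  -- the Lyapunov function centered at θinf
  set Bt : ℝ → ℝ := Bfun θinf θ with hBt
  have hBtanti : AntitoneOn Bt (Ici 0) := Bfun_antitone hc hθpos hode hθinfpos hmininf
  have hBtnonneg : ∀ t, 0 ≤ t → 0 ≤ Bt t := fun t ht => Bfun_nonneg hθpos hθinfpos ht
  have hBtξ : Tendsto (fun k : ℕ => Bt (ξ (φ k))) atTop (𝓝 0) := by
    have hcont : Continuous (fun v : Fin m → ℝ => ∑ i, gterm (θinf i) (v i)) :=
      continuous_finset_sum _ fun i _ => (gterm_continuous (θinf i)).comp (continuous_apply i)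
    have h0 : ∑ i, gterm (θinf i) (θinf i) = 0 := by simp [gterm_self]
    have h1 := (hcont.tendsto θinf).comp hθtend
    rw [h0] at h1
    exact h1
  have hBttend : Tendsto Bt atTop (𝓝 0) := by
    rw [Metric.tendsto_atTop]
    intro ε hε
    obtain ⟨k, hk⟩ := (hBtξ.eventually (gt_mem_nhds hε)).exists
    refine ⟨ξ (φ k), fun t ht => ?_⟩
    have ht0 : (0:ℝ) ≤ t := le_trans (hξpos (φ k)) ht
    have h1 : Bt t ≤ Bt (ξ (φ k)) := hBtanti (mem_Ici.mpr (hξpos (φ k))) (mem_Ici.mpr ht0) ht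
    have h2 : 0 ≤ Bt t := hBtnonneg t ht0
    rw [Real.dist_eq, sub_zero, abs_of_nonneg h2]
    exact lt_of_le_of_lt h1 hk
  -- coordinatewise convergence
  have hcoord : ∀ i, Tendsto (fun t => θ t i) atTop (𝓝 (θinf i)) := by
    intro i
    rw [Metric.tendsto_atTop]
    intro ε hε
    obtain ⟨δ, hδpos, hδ⟩ := gterm_small (hθinfpos i) ε hε
    rw [Metric.tendsto_atTop] at hBttend
    obtain ⟨N, hN⟩ := hBttend δ hδpos
    refine ⟨max N 0, fun t ht => ?_⟩
    have ht0 : (0:ℝ) ≤ t := le_trans (le_max_right N 0) ht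
    have h1 : gterm (θinf i) (θ t i) ≤ Bt t := Bfun_term_le hθpos hθinfpos ht0 i
    have h2 := hN t (le_trans (le_max_left N 0) ht)
    rw [Real.dist_eq, sub_zero] at h2
    have h3 : Bt t < δ := lt_of_le_of_lt (le_abs_self _) h2
    have h4 := hδ (θ t i) (hθpos t ht0 i) (le_of_lt (lt_of_le_of_lt h1 h3))
    rw [Real.dist_eq]
    exact h4
  refine ⟨θinf, fun i => (hθinfpos i).le, tendsto_pi_nhds.mpr hcoord, ?_⟩
  intro θ' hθ'
  rw [KL_eq A hc hx hθinfpos, KL_eq A hc hx hθ']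
  have := hmininf _ (pA_mem_Pset A (fun i => Real.log (θ' i)))
  linarith
end

section
/- (EM scheme, Lyapunov property.) Let A = (a_{ij}) be an m×n matrix of nonnegative integers, c ∈ ℝ^n_{>0}, and define y_A : ℝ^m_{>0} → ℝ^n_{>0} by y_A(θ)_j := c_j Π_{i=1}^m θ_i^{a_{ij}}. Let 𝒮 be an integer matrix with n columns and {b_1,…,b_r} ⊆ ℤ^n a ℤ-basis of (ker 𝒮) ∩ ℤ^n. Choose rates k_l⁺, k_l⁻ > 0 and exponent vectors d_l, e_l ∈ ℤ^m_{≥0} such that (k_l⁻/k_l⁺)·θ^{e_l − d_l} = y_A(θ)^{b_l} for all θ ∈ ℝ^m_{>0} and l = 1,…,r. Let (x, θ) : [0,∞) → ℝ^n_{>0} × ℝ^m_{>0} be differentiable with ẋ(t) = Σ_{l=1}^r b_l ( k_l⁻ θ(t)^{e_l} x(t)^{b_l⁻} − k_l⁺ θ(t)^{d_l} x(t)^{b_l⁺} ) and θ̇(t) = A(x(t) − y_A(θ(t))). Then d/dt D(x(t)‖y_A(θ(t))) ≤ 0 for all t, with equality at time t if and only if both x(t) is the E-projection of y_A(θ(t))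 to {x ∈ ℝ^n_{≥0} : 𝒮x = 𝒮x(0)} and A(x(t) − y_A(θ(t))) = 0. -/
lemma int_toNat_split (z : ℤ) : ((z.toNat : ℝ)) - (((-z).toNat : ℝ)) = (z : ℝ) := by
  have : (z.toNat : ℤ) - ((-z).toNat : ℤ) = z := by omega
  exact_mod_cast this

lemma gibbs {a bb : ℝ} (ha : 0 < a) (hb : 0 ≤ bb) :
    0 ≤ bb * Real.log (bb / a) - bb + a := by
  rcases eq_or_lt_of_le hb with h | h
  · simp [← h]; linarith
  · have h1 : Real.log (a / bb) ≤ a / bb - 1 := Real.log_le_sub_one_of_pos (by positivity)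
    have h3 : bb * Real.log (a / bb) ≤ bb * (a / bb - 1) := by
      exact mul_le_mul_of_nonneg_left h1 hb
    have h4 : bb * (a / bb - 1) = a - bb := by field_simp
    have h5 : Real.log (a / bb) = Real.log a - Real.log bb := Real.log_div ha.ne' h.ne'
    have h6 : Real.log (bb / a) = Real.log bb - Real.log a := Real.log_div h.ne' ha.ne'
    nlinarith

lemma slack_nonneg {a b : ℝ} (ha : 0 < a) (hb : 0 < b) :
    0 ≤ (a - b) * (Real.log a - Real.log b) := by
  rcases le_total a b with h | h
  · have : Real.log a ≤ Real.log b := Real.log_le_log ha h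
    nlinarith
  · have : Real.log b ≤ Real.log a := Real.log_le_log hb h
    exact mul_nonneg (by linarith) (by linarith)

lemma slack_eq_zero {a b : ℝ} (ha : 0 < a) (hb : 0 < b) :
    (a - b) * (Real.log a - Real.log b) = 0 ↔ a = b := by
  constructor
  · intro h
    rcases lt_trichotomy a b with hlt | heq | hgt
    · exfalso
      have h1 : Real.log a < Real.log b := Real.log_lt_log ha hlt
      nlinarith
    · exact heq
    · exfalso
      have h1 : Real.log b < Real.log a := Real.log_lt_log hb hgt
      nlinarith
  · intro h; rw [h]; ring

lemma rat_mul_den_int (q : ℚ) (N : ℕ) (h : (q.den : ℤ) ∣ (N : ℤ)) :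
    ∃ z : ℤ, (z : ℚ) = (N : ℚ) * q := by
  obtain ⟨k, hk⟩ := h
  refine ⟨k * q.num, ?_⟩
  have hden : (q.den : ℚ) ≠ 0 := by exact_mod_cast q.den_nz
  have hq : (q.num : ℚ) / (q.den : ℚ) = q := Rat.num_div_den q
  have hNQ : (N : ℚ) = (q.den : ℚ) * (k : ℚ) := by exact_mod_cast hk
  have h1 : ((k * q.num : ℤ) : ℚ) = (k : ℚ) * (q.num : ℚ) := by push_cast; ring
  have h2 : (q.den : ℚ) * q = (q.num : ℚ) := by
    rw [mul_comm]; exact_mod_cast Rat.mul_den_eq_num q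
  rw [h1, hNQ]
  linear_combination (-(k : ℚ)) * h2

lemma ker_orth {n p r : ℕ} (𝒮 : Matrix (Fin p) (Fin n) ℤ) (b : Fin r → Fin n → ℤ)
    (hbspan : ∀ v : Fin n → ℤ, (∀ i, ∑ j, 𝒮 i j * v j = 0) →
      ∃ mm : Fin r → ℤ, v = ∑ l, mm l • b l)
    (L : Fin n → ℝ) (hL : ∀ l, ∑ j, (b l j : ℝ) * L j = 0)
    (u : Fin n → ℝ) (hu : ∀ i, ∑ j, (𝒮 i j : ℝ) * u j = 0) :
    ∑ j, u j * L j = 0 := by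
  classical
  -- first: rational kernel vectors are orthogonal to L
  have hrat : ∀ w : Fin n → ℚ, (∀ i, ∑ j, (𝒮 i j : ℚ) * w j = 0) →
      ∑ j, (w j : ℝ) * L j = 0 := by
    intro w hw
    set N : ℕ := ∏ j, (w j).den with hN
    have hNpos : 0 < N := Finset.prod_pos (fun j _ => (w j).pos)
    have hvex : ∀ j, ∃ z : ℤ, (z : ℚ) = (N : ℚ) * w j := by
      intro j
      apply rat_mul_den_int
      exact_mod_cast Finset.dvd_prod_of_mem (fun j => (w j).den) (Finset.mem_univ j)
    choose v hv using hvex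
    have hker : ∀ i, ∑ j, 𝒮 i j * v j = 0 := by
      intro i
      have hcast : ((∑ j, 𝒮 i j * v j : ℤ) : ℚ) = (N : ℚ) * ∑ j, (𝒮 i j : ℚ) * w j := by
        push_cast
        rw [Finset.mul_sum]
        refine Finset.sum_congr rfl fun j _ => ?_
        rw [hv j]; ring
      rw [hw i, mul_zero] at hcast
      exact_mod_cast hcast
    obtain ⟨mm, hmm⟩ := hbspan v hker
    have key : ∑ j, (v j : ℝ) * L j = 0 := by
      have hvj : ∀ j, (v j : ℝ) = ∑ l, (mm l : ℝ) * (b l j : ℝ) := by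
        intro j
        have := congrFun hmm j
        simp only [Finset.sum_apply, Pi.smul_apply, smul_eq_mul] at this
        exact_mod_cast this
      calc ∑ j, (v j : ℝ) * L j = ∑ j, ∑ l, (mm l : ℝ) * ((b l j : ℝ) * L j) := by
            refine Finset.sum_congr rfl fun j _ => ?_
            rw [hvj j, Finset.sum_mul]
            exact Finset.sum_congr rfl fun l _ => by ring
        _ = ∑ l, (mm l : ℝ) * (∑ j, (b l j : ℝ) * L j) := by
            rw [Finset.sum_comm]
            exact Finset.sum_congr rfl fun l _ => by rw [Finset.mul_sum]
        _ = 0 := by simp [hL]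
    have hNv : ∀ j, (v j : ℝ) = (N : ℝ) * (w j : ℝ) := by
      intro j
      have h := hv j
      have h2 : ((v j : ℚ) : ℝ) = (((N : ℚ) * w j : ℚ) : ℝ) := by rw [h]
      push_cast at h2
      exact h2
    have : (N : ℝ) * ∑ j, (w j : ℝ) * L j = 0 := by
      rw [Finset.mul_sum, ← key]
      exact Finset.sum_congr rfl fun j _ => by rw [hNv j]; ring
    have hNR : (N : ℝ) ≠ 0 := by positivity
    exact (mul_eq_zero.mp this).resolve_left hNR
  -- Hamel basis decomposition of u
  let M := Module.Basis.ofVectorSpace ℚ ℝ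
  let S : Finset _ := Finset.univ.biUnion fun j : Fin n => (M.repr (u j)).support
  have hrepr : ∀ j, u j = ∑ α ∈ S, ((M.repr (u j) α : ℚ) : ℝ) * M α := by
    intro j
    have h1 := M.linearCombination_repr (u j)
    rw [Finsupp.linearCombination_apply, Finsupp.sum] at h1
    have h2 : ∑ a ∈ (M.repr (u j)).support, (M.repr (u j)) a • M a
        = ∑ α ∈ S, ((M.repr (u j) α : ℚ) : ℝ) * M α := by
      rw [← Finset.sum_subset (Finset.subset_biUnion_of_mem _ (Finset.mem_univ j))
        (fun α _ hα => by rw [Finsupp.notMem_support_iff.mp hα]; simp)]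
      exact Finset.sum_congr rfl fun α _ => by rw [Rat.smul_def]
    exact h1.symm.trans h2
  have hcol : ∀ α ∈ S, ∑ j, ((M.repr (u j) α : ℚ) : ℝ) * L j = 0 := by
    intro α _
    apply hrat
    intro i
    have e1 : ∑ j, (𝒮 i j : ℚ) • u j = 0 := by
      rw [← hu i]
      refine Finset.sum_congr rfl fun j _ => ?_
      rw [Rat.smul_def]
      norm_num
    have e2 : ∑ j, (𝒮 i j : ℚ) * (M.repr (u j) α) = M.repr (∑ j, (𝒮 i j : ℚ) • u j) α := by
      rw [map_sum, Finsupp.finset_sum_apply]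
      refine Finset.sum_congr rfl fun j _ => ?_
      rw [map_smul, Finsupp.smul_apply, smul_eq_mul]
    rw [e2, e1, map_zero, Finsupp.coe_zero, Pi.zero_apply]
  calc ∑ j, u j * L j = ∑ j, ∑ α ∈ S, (M α) * (((M.repr (u j) α : ℚ) : ℝ) * L j) := by
        refine Finset.sum_congr rfl fun j _ => ?_
        conv_lhs => rw [hrepr j, Finset.sum_mul]
        exact Finset.sum_congr rfl fun α _ => by ring
    _ = ∑ α ∈ S, (M α) * ∑ j, ((M.repr (u j) α : ℚ) : ℝ) * L j := by
        rw [Finset.sum_comm]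
        exact Finset.sum_congr rfl fun α _ => by rw [Finset.mul_sum]
    _ = 0 := by
        refine Finset.sum_eq_zero fun α hα => ?_
        rw [hcol α hα, mul_zero]

lemma kl_min {n : ℕ} (xx z y : Fin n → ℝ) (hx : ∀ j, 0 < xx j) (hy : ∀ j, 0 < y j)
    (hz : ∀ j, 0 ≤ z j)
    (horth : ∑ j, (z j - xx j) * Real.log (xx j / y j) = 0) :
    KL xx y ≤ KL z y := by
  have key : ∀ j, xx j * Real.log (xx j / y j) - xx j + y j
      + (z j - xx j) * Real.log (xx j / y j)
      ≤ z j * Real.log (z j / y j) - z j + y j := by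
    intro j
    rcases eq_or_lt_of_le (hz j) with h0 | h0
    · rw [← h0]
      have hlog : (0:ℝ) * Real.log (0 / y j) = 0 := by simp
      rw [hlog]
      have := (hx j).le
      nlinarith
    · have hgib := gibbs (hx j) h0.le
      have hsplit : Real.log (z j / y j) - Real.log (xx j / y j) = Real.log (z j / xx j) := by
        rw [Real.log_div h0.ne' (hy j).ne', Real.log_div (hx j).ne' (hy j).ne',
          Real.log_div h0.ne' (hx j).ne']
        ring
      nlinarith [hgib, hsplit]
  have hsum : KL xx y + ∑ j, (z j - xx j) * Real.log (xx j / y j) ≤ KL z y := by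
    unfold KL
    rw [← Finset.sum_add_distrib]
    exact Finset.sum_le_sum fun j _ => key j
  rw [horth, add_zero] at hsum
  exact hsum

/-- EM scheme, Lyapunov property: along a trajectory
`(x(t), θ(t))` of the EM reaction network dynamics,
`d/dt D(x(t)‖y_A(θ(t))) ≤ 0`, with equality at time `t` iff both `x(t)` is the
E-projection of `y_A(θ(t))` to `{x ∈ ℝ^n_{≥0} : 𝒮x = 𝒮x(0)}` and
`A(x(t) − y_A(θ(t))) = 0`. -/
theorem em_scheme_lyapunov
    {m n p r : ℕ} (A : Matrix (Fin m) (Fin n) ℕ) (c : Fin n → ℝ)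
    (hc : ∀ j, 0 < c j)
    (𝒮 : Matrix (Fin p) (Fin n) ℤ)
    (b : Fin r → Fin n → ℤ)
    -- `b` is a ℤ-basis of the lattice `(ker 𝒮) ∩ ℤ^n`:
    (hbker : ∀ l, ∀ i, ∑ j, 𝒮 i j * b l j = 0)
    (hbspan : ∀ v : Fin n → ℤ, (∀ i, ∑ j, 𝒮 i j * v j = 0) →
      ∃ mm : Fin r → ℤ, v = ∑ l, mm l • b l)
    (hbindep : LinearIndependent ℤ b)
    (kp km : Fin r → ℝ) (hkp : ∀ l, 0 < kp l) (hkm : ∀ l, 0 < km l)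
    (d e : Fin r → Fin m → ℕ)
    (hrates : ∀ θ' : Fin m → ℝ, (∀ i, 0 < θ' i) → ∀ l,
      km l / kp l * ∏ i, θ' i ^ ((e l i : ℤ) - (d l i : ℤ)) =
        ∏ j, (yA A c θ' j) ^ (b l j))
    (x : ℝ → Fin n → ℝ) (θ : ℝ → Fin m → ℝ)
    (hxpos : ∀ t, 0 ≤ t → ∀ j, 0 < x t j)
    (hθpos : ∀ t, 0 ≤ t → ∀ i, 0 < θ t i)
    (hxode : ∀ t, 0 ≤ t → HasDerivAt x
      (∑ l, (km l * (∏ i, θ t i ^ e l i) * (∏ j, x t j ^ (-(b l j)).toNat)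
            - kp l * (∏ i, θ t i ^ d l i) * (∏ j, x t j ^ (b l j).toNat)) •
        (fun j => (b l j : ℝ))) t)
    (hθode : ∀ t, 0 ≤ t → HasDerivAt θ
      (fun i => ∑ j, (A i j : ℝ) * (x t j - yA A c (θ t) j)) t) :
    ∀ t, 0 ≤ t → ∃ der : ℝ,
      HasDerivAt (fun s => KL (x s) (yA A c (θ s))) der t ∧ der ≤ 0 ∧
        (der = 0 ↔
          ((((∀ j, 0 ≤ x t j) ∧
              ∀ i, ∑ j, (𝒮 i j : ℝ) * x t j = ∑ j, (𝒮 i j : ℝ) * x 0 j) ∧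
            ∀ z : Fin n → ℝ,
              ((∀ j, 0 ≤ z j) ∧
                ∀ i, ∑ j, (𝒮 i j : ℝ) * z j = ∑ j, (𝒮 i j : ℝ) * x 0 j) →
              KL (x t) (yA A c (θ t)) ≤ KL z (yA A c (θ t))) ∧
          ∀ i, ∑ j, (A i j : ℝ) * (x t j - yA A c (θ t) j) = 0)) := by
  intro t ht
  classical
  have hxp : ∀ j, 0 < x t j := hxpos t ht
  have hθp : ∀ i, 0 < θ t i := hθpos t ht
  set yt : Fin n → ℝ := yA A c (θ t) with hyt
  have hyp : ∀ j, 0 < yt j := by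
    intro j
    rw [hyt]
    unfold yA
    exact mul_pos (hc j) (Finset.prod_pos fun i _ => pow_pos (hθp i) _)
  set Lx : Fin n → ℝ := fun j => Real.log (x t j / yt j) with hLx
  set θd : Fin m → ℝ := fun i => ∑ j, (A i j : ℝ) * (x t j - yt j) with hθd
  set Fp : Fin r → ℝ :=
    fun l => kp l * (∏ i, θ t i ^ d l i) * (∏ j, x t j ^ (b l j).toNat) with hFp
  set Fm : Fin r → ℝ :=
    fun l => km l * (∏ i, θ t i ^ e l i) * (∏ j, x t j ^ (-(b l j)).toNat) with hFm
  have hFpp : ∀ l, 0 < Fp l := by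
    intro l; rw [hFp]
    exact mul_pos (mul_pos (hkp l) (Finset.prod_pos fun i _ => pow_pos (hθp i) _))
      (Finset.prod_pos fun j _ => pow_pos (hxp j) _)
  have hFmp : ∀ l, 0 < Fm l := by
    intro l; rw [hFm]
    exact mul_pos (mul_pos (hkm l) (Finset.prod_pos fun i _ => pow_pos (hθp i) _))
      (Finset.prod_pos fun j _ => pow_pos (hxp j) _)
  set xd : Fin n → ℝ := fun j => ∑ l, (Fm l - Fp l) * (b l j : ℝ) with hxd
  set yd : Fin n → ℝ := fun j => yt j * ∑ i, (A i j : ℝ) * θd i / θ t i with hyd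
  -- componentwise derivatives
  have hxj : ∀ j, HasDerivAt (fun s => x s j) (xd j) t := by
    intro j
    have h := hasDerivAt_pi.mp (hxode t ht) j
    convert h using 1
    · rfl
    · rfl
    rw [hxd]
    simp only [Finset.sum_apply, Pi.smul_apply, smul_eq_mul, hFp, hFm]
  have hθi : ∀ i, HasDerivAt (fun s => θ s i) (θd i) t := by
    intro i
    exact hasDerivAt_pi.mp (hθode t ht) i
  have hyj : ∀ j, HasDerivAt (fun s => yA A c (θ s) j) (yd j) t := by
    intro j
    have hpow : ∀ i : Fin m, HasDerivAt (fun s => θ s i ^ A i j)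
        ((A i j : ℝ) * θ t i ^ (A i j - 1) * θd i) t := fun i => (hθi i).pow _
    have hprod := HasDerivAt.finset_prod (u := Finset.univ) (fun i _ => hpow i)
    have hmul := hprod.const_mul (c j)
    have heq : (fun s => yA A c (θ s) j) = fun s => c j * ∏ i, θ s i ^ A i j := rfl
    rw [heq]
    convert hmul using 1
    · rfl
    · rfl
    · funext s; simp only [Finset.prod_apply]
    simp only [hyd]
    rw [Finset.mul_sum, Finset.mul_sum]
    refine Finset.sum_congr rfl fun i _ => ?_
    rw [smul_eq_mul]
    rcases Nat.eq_zero_or_pos (A i j) with h0 | hApos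
    · simp [h0]
    · have hsplit : θ t i ^ A i j = θ t i ^ (A i j - 1) * θ t i := by
        rw [← pow_succ]; congr 1; omega
      have herase : (∏ i', θ t i' ^ A i' j)
          = (∏ i' ∈ Finset.univ.erase i, θ t i' ^ A i' j) * θ t i ^ A i j :=
        (Finset.prod_erase_mul _ _ (Finset.mem_univ i)).symm
      rw [hyt]
      show (c j * ∏ i', θ t i' ^ A i' j) * ((A i j : ℝ) * θd i / θ t i) = _
      rw [herase, hsplit]
      field_simp [(hθp i).ne']
  -- each summand of KL has a derivative
  have hDj : ∀ j, HasDerivAt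
      (fun s => x s j * Real.log (x s j / yA A c (θ s) j) - x s j + yA A c (θ s) j)
      (xd j * Lx j + yd j * (1 - x t j / yt j)) t := by
    intro j
    have h1 := (hxj j).div (hyj j) (hyp j).ne'
    have h2 := h1.log (div_ne_zero (hxp j).ne' (hyp j).ne')
    have h3 := (hxj j).mul h2
    have h4 := (h3.sub (hxj j)).add (hyj j)
    convert h4 using 1
    · rfl
    · rfl
    · rfl
    rw [hLx]
    have hx0 := (hxp j).ne'
    have hy0 := (hyp j).ne'
    simp only [Pi.div_apply, ← hyt]
    field_simp
    ring
  have hKL : HasDerivAt (fun s => KL (x s) (yA A c (θ s)))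
      (∑ j, (xd j * Lx j + yd j * (1 - x t j / yt j))) t := by
    have h := HasDerivAt.fun_sum (u := Finset.univ) (fun j (_ : j ∈ Finset.univ) => hDj j)
    exact h
  -- key logarithmic identity
  have log_triple : ∀ (k : ℝ), 0 < k → ∀ (dd : Fin m → ℕ) (ee : Fin n → ℕ),
      Real.log (k * (∏ i, θ t i ^ dd i) * (∏ j, x t j ^ ee j))
        = Real.log k + (∑ i, (dd i : ℝ) * Real.log (θ t i))
          + ∑ j, (ee j : ℝ) * Real.log (x t j) := by
    intro k hk dd ee
    rw [Real.log_mul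
        (mul_pos hk (Finset.prod_pos fun i _ => pow_pos (hθp i) _)).ne'
        (Finset.prod_pos fun j _ => pow_pos (hxp j) _).ne',
      Real.log_mul hk.ne' (Finset.prod_pos fun i _ => pow_pos (hθp i) _).ne',
      Real.log_prod (fun i _ => (pow_pos (hθp i) _).ne'),
      Real.log_prod (fun j _ => (pow_pos (hxp j) _).ne')]
    simp [Real.log_pow]
  have keylog : ∀ l, ∑ j, (b l j : ℝ) * Lx j = Real.log (Fp l) - Real.log (Fm l) := by
    intro l
    have hlogp : Real.log (Fp l) = Real.log (kp l)
        + (∑ i, (d l i : ℝ) * Real.log (θ t i))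
        + ∑ j, ((b l j).toNat : ℝ) * Real.log (x t j) := by
      rw [hFp]; exact log_triple (kp l) (hkp l) (d l) _
    have hlogm : Real.log (Fm l) = Real.log (km l)
        + (∑ i, (e l i : ℝ) * Real.log (θ t i))
        + ∑ j, (((-(b l j)).toNat : ℝ)) * Real.log (x t j) := by
      rw [hFm]; exact log_triple (km l) (hkm l) (e l) _
    have hrl := hrates (θ t) hθp l
    rw [← hyt] at hrl
    have hlogr : Real.log (km l) - Real.log (kp l)
        + ((∑ i, (e l i : ℝ) * Real.log (θ t i)) - ∑ i, (d l i : ℝ) * Real.log (θ t i))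
        = ∑ j, (b l j : ℝ) * Real.log (yt j) := by
      have h := congrArg Real.log hrl
      rw [Real.log_mul (div_pos (hkm l) (hkp l)).ne'
          (Finset.prod_pos (fun i _ => zpow_pos (hθp i) _)).ne',
        Real.log_div (hkm l).ne' (hkp l).ne',
        Real.log_prod (fun i _ => (zpow_pos (hθp i) _).ne'),
        Real.log_prod (fun j _ => (zpow_pos (hyp j) _).ne')] at h
      simp only [Real.log_zpow] at h
      push_cast at h
      rw [← h, ← Finset.sum_sub_distrib]
      congr 1
      exact Finset.sum_congr rfl fun i _ => by ring
    have hLxsum : ∑ j, (b l j : ℝ) * Lx j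
        = (∑ j, (b l j : ℝ) * Real.log (x t j)) - ∑ j, (b l j : ℝ) * Real.log (yt j) := by
      rw [← Finset.sum_sub_distrib]
      refine Finset.sum_congr rfl fun j _ => ?_
      rw [hLx]
      show (b l j : ℝ) * Real.log (x t j / yt j) = _
      rw [Real.log_div (hxp j).ne' (hyp j).ne']
      ring
    have hsplitx : ∑ j, (b l j : ℝ) * Real.log (x t j)
        = (∑ j, ((b l j).toNat : ℝ) * Real.log (x t j))
          - ∑ j, (((-(b l j)).toNat : ℝ)) * Real.log (x t j) := by
      rw [← Finset.sum_sub_distrib]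
      refine Finset.sum_congr rfl fun j _ => ?_
      linear_combination (-(Real.log (x t j))) * int_toNat_split (b l j)
    rw [hLxsum, hsplitx, hlogp, hlogm]
    linarith [hlogr]
  -- the derivative equals the explicit dissipation expression
  set der : ℝ := -((∑ l, (Fp l - Fm l) * (Real.log (Fp l) - Real.log (Fm l)))
      + ∑ i, θd i ^ 2 / θ t i) with hder
  have hsum1 : ∑ j, xd j * Lx j
      = -∑ l, (Fp l - Fm l) * (Real.log (Fp l) - Real.log (Fm l)) := by
    calc ∑ j, xd j * Lx j
        = ∑ j, ∑ l, (Fm l - Fp l) * ((b l j : ℝ) * Lx j) := by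
          refine Finset.sum_congr rfl fun j _ => ?_
          rw [hxd]
          show (∑ l, (Fm l - Fp l) * (b l j : ℝ)) * Lx j = _
          rw [Finset.sum_mul]
          exact Finset.sum_congr rfl fun l _ => by ring
      _ = ∑ l, (Fm l - Fp l) * ∑ j, (b l j : ℝ) * Lx j := by
          rw [Finset.sum_comm]
          exact Finset.sum_congr rfl fun l _ => by rw [Finset.mul_sum]
      _ = -∑ l, (Fp l - Fm l) * (Real.log (Fp l) - Real.log (Fm l)) := by
          rw [← Finset.sum_neg_distrib]
          refine Finset.sum_congr rfl fun l _ => ?_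
          rw [keylog l]
          ring
  have hsum2 : ∑ j, yd j * (1 - x t j / yt j) = -∑ i, θd i ^ 2 / θ t i := by
    calc ∑ j, yd j * (1 - x t j / yt j)
        = ∑ j, ∑ i, (A i j : ℝ) * θd i / θ t i * (yt j - x t j) := by
          refine Finset.sum_congr rfl fun j _ => ?_
          have hyx : yt j * (1 - x t j / yt j) = yt j - x t j := by
            field_simp [(hyp j).ne']
          calc yd j * (1 - x t j / yt j)
              = (∑ i, (A i j : ℝ) * θd i / θ t i) * (yt j * (1 - x t j / yt j)) := by
                rw [hyd]; ring
            _ = ∑ i, (A i j : ℝ) * θd i / θ t i * (yt j - x t j) := by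
                rw [hyx, Finset.sum_mul]
      _ = ∑ i, θd i / θ t i * ∑ j, (A i j : ℝ) * (yt j - x t j) := by
          rw [Finset.sum_comm]
          refine Finset.sum_congr rfl fun i _ => ?_
          rw [Finset.mul_sum]
          exact Finset.sum_congr rfl fun j _ => by ring
      _ = -∑ i, θd i ^ 2 / θ t i := by
          rw [← Finset.sum_neg_distrib]
          refine Finset.sum_congr rfl fun i _ => ?_
          have hinner : ∑ j, (A i j : ℝ) * (yt j - x t j) = -θd i := by
            rw [hθd]
            show _ = -∑ j, (A i j : ℝ) * (x t j - yt j)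
            rw [← Finset.sum_neg_distrib]
            exact Finset.sum_congr rfl fun j _ => by ring
          rw [hinner]
          ring
  have hderiv : HasDerivAt (fun s => KL (x s) (yA A c (θ s))) der t := by
    convert hKL using 1
    rw [Finset.sum_add_distrib, hsum1, hsum2, hder]
    ring
  -- sign conditions
  have hS1 : ∀ l ∈ Finset.univ, 0 ≤ (Fp l - Fm l) * (Real.log (Fp l) - Real.log (Fm l)) :=
    fun l _ => slack_nonneg (hFpp l) (hFmp l)
  have hS2 : ∀ i ∈ Finset.univ, 0 ≤ θd i ^ 2 / θ t i :=
    fun i _ => div_nonneg (sq_nonneg _) (hθp i).le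
  have hle : der ≤ 0 := by
    rw [hder]
    have := Finset.sum_nonneg hS1
    have := Finset.sum_nonneg hS2
    linarith
  have hchar : der = 0 ↔ (∀ l, Fp l = Fm l) ∧ (∀ i, θd i = 0) := by
    rw [hder, neg_eq_zero,
      add_eq_zero_iff_of_nonneg (Finset.sum_nonneg hS1) (Finset.sum_nonneg hS2),
      Finset.sum_eq_zero_iff_of_nonneg hS1, Finset.sum_eq_zero_iff_of_nonneg hS2]
    constructor
    · rintro ⟨h1, h2⟩
      constructor
      · intro l; exact (slack_eq_zero (hFpp l) (hFmp l)).mp (h1 l (Finset.mem_univ l))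
      · intro i
        have := h2 i (Finset.mem_univ i)
        have hne : θ t i ≠ 0 := (hθp i).ne'
        have : θd i ^ 2 = 0 := by
          rcases div_eq_zero_iff.mp this with h | h
          · exact h
          · exact absurd h hne
        exact pow_eq_zero_iff (by norm_num) |>.mp this
    · rintro ⟨h1, h2⟩
      constructor
      · intro l _; rw [(slack_eq_zero (hFpp l) (hFmp l)).mpr (h1 l)]
      · intro i _; rw [h2 i]; simp
  -- conservation law
  have hbkR0 : ∀ (i : Fin p) (l : Fin r), ∑ j, (𝒮 i j : ℝ) * (b l j : ℝ) = 0 := by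
    intro i l
    have h := hbker l i
    have h2 : ((∑ j, 𝒮 i j * b l j : ℤ) : ℝ) = 0 := by rw [h]; simp
    push_cast at h2
    exact h2
  have hcons : ∀ i, ∑ j, (𝒮 i j : ℝ) * x t j = ∑ j, (𝒮 i j : ℝ) * x 0 j := by
    intro i
    have hds : ∀ s ∈ Set.Icc (0:ℝ) t, HasDerivAt (fun s' => ∑ j, (𝒮 i j : ℝ) * x s' j) 0 s := by
      intro s hs
      have hxs := hxode s hs.1
      have hcomp : ∀ j, HasDerivAt (fun s' => x s' j)
          (∑ l, (km l * (∏ i', θ s i' ^ e l i') * (∏ j', x s j' ^ (-(b l j')).toNat)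
            - kp l * (∏ i', θ s i' ^ d l i') * (∏ j', x s j' ^ (b l j').toNat)) * (b l j : ℝ)) s := by
        intro j
        have h := hasDerivAt_pi.mp hxs j
        convert h using 1
        · rfl
        · rfl
        simp only [Finset.sum_apply, Pi.smul_apply, smul_eq_mul]
      have hsum := HasDerivAt.fun_sum (u := Finset.univ)
        (fun j (_ : j ∈ Finset.univ) => (hcomp j).const_mul ((𝒮 i j : ℝ)))
      convert hsum using 1
      · rfl
      · rfl
      rw [eq_comm]
      calc ∑ j, (𝒮 i j : ℝ) * ∑ l, (km l * (∏ i', θ s i' ^ e l i') * (∏ j', x s j' ^ (-(b l j')).toNat)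
            - kp l * (∏ i', θ s i' ^ d l i') * (∏ j', x s j' ^ (b l j').toNat)) * (b l j : ℝ)
          = ∑ l, (km l * (∏ i', θ s i' ^ e l i') * (∏ j', x s j' ^ (-(b l j')).toNat)
            - kp l * (∏ i', θ s i' ^ d l i') * (∏ j', x s j' ^ (b l j').toNat))
              * ∑ j, (𝒮 i j : ℝ) * (b l j : ℝ) := by
            rw [show (∑ j, (𝒮 i j : ℝ) * ∑ l, (km l * (∏ i', θ s i' ^ e l i') * (∏ j', x s j' ^ (-(b l j')).toNat)
                - kp l * (∏ i', θ s i' ^ d l i') * (∏ j', x s j' ^ (b l j').toNat)) * (b l j : ℝ))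
              = ∑ j, ∑ l, (km l * (∏ i', θ s i' ^ e l i') * (∏ j', x s j' ^ (-(b l j')).toNat)
                - kp l * (∏ i', θ s i' ^ d l i') * (∏ j', x s j' ^ (b l j').toNat)) * ((𝒮 i j : ℝ) * (b l j : ℝ))
              from Finset.sum_congr rfl fun j _ => by
                rw [Finset.mul_sum]; exact Finset.sum_congr rfl fun l _ => by ring]
            rw [Finset.sum_comm]
            exact Finset.sum_congr rfl fun l _ => by rw [Finset.mul_sum]
        _ = 0 := by
            rw [Finset.sum_eq_zero]
            intro l _
            rw [hbkR0 i l, mul_zero]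
    have hcont : ContinuousOn (fun s' => ∑ j, (𝒮 i j : ℝ) * x s' j) (Set.Icc 0 t) :=
      fun s hs => ((hds s hs).continuousAt).continuousWithinAt
    have := constant_of_has_deriv_right_zero hcont
      (fun s hs => ((hds s (Set.mem_Icc.mpr ⟨hs.1, hs.2.le⟩)).hasDerivWithinAt)) t
      (Set.mem_Icc.mpr ⟨ht, le_refl t⟩)
    exact this
  have hbkR : ∀ i l, ∑ j, (𝒮 i j : ℝ) * (b l j : ℝ) = 0 := by
    intro i l
    have h := hbker l i
    have h2 : ((∑ j, 𝒮 i j * b l j : ℤ) : ℝ) = 0 := by rw [h]; simp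
    push_cast at h2
    exact h2
  refine ⟨der, hderiv, hle, ?_⟩
  rw [hchar]
  constructor
  · rintro ⟨hF, hθ0⟩
    have hLzero : ∀ l, ∑ j, (b l j : ℝ) * Lx j = 0 := by
      intro l; rw [keylog l, hF l, sub_self]
    refine ⟨⟨⟨fun j => (hxp j).le, hcons⟩, ?_⟩, ?_⟩
    · intro z hz
      have horth : ∑ j, (z j - x t j) * Lx j = 0 := by
        apply ker_orth 𝒮 b hbspan Lx hLzero
        intro i
        have : ∑ j, (𝒮 i j : ℝ) * (z j - x t j)
            = (∑ j, (𝒮 i j : ℝ) * z j) - ∑ j, (𝒮 i j : ℝ) * x t j := by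
          rw [← Finset.sum_sub_distrib]
          exact Finset.sum_congr rfl fun j _ => by ring
        rw [this, hz.2 i, hcons i, sub_self]
      exact kl_min (x t) z yt hxp hyp hz.1 horth
    · intro i
      have := hθ0 i
      rw [hθd] at this
      simpa [hyt] using this
  · rintro ⟨⟨⟨hxnn, hsx⟩, hmin⟩, hθ0⟩
    constructor
    · intro l
      set bb : Fin n → ℝ := fun j => (b l j : ℝ) with hbb
      set g : ℝ → ℝ := fun ε => KL (fun j => x t j + ε * bb j) yt with hg
      -- derivative of g at 0
      have hgj : ∀ j, HasDerivAt
          (fun ε => (x t j + ε * bb j) * Real.log ((x t j + ε * bb j) / yt j)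
            - (x t j + ε * bb j) + yt j) (bb j * Lx j) 0 := by
        intro j
        have hu : HasDerivAt (fun ε : ℝ => x t j + ε * bb j) (bb j) 0 := by
          simpa using ((hasDerivAt_id (0:ℝ)).mul_const (bb j)).const_add (x t j)
        have hval : x t j + 0 * bb j = x t j := by ring
        have h1 := hu.div_const (yt j)
        have h2 : HasDerivAt (fun ε => Real.log ((x t j + ε * bb j) / yt j))
            ((bb j / yt j) / ((x t j + 0 * bb j) / yt j)) 0 := by
          apply h1.log
          rw [hval]
          exact div_ne_zero (hxp j).ne' (hyp j).ne'
        have h3 := hu.mul h2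
        have h4 := (h3.sub hu).add_const (yt j)
        convert h4 using 1
        · rfl
        · rfl
        · rfl
        rw [hval, hLx]
        have hx0 := (hxp j).ne'
        have hy0 := (hyp j).ne'
        field_simp
        try ring
      have hgd : HasDerivAt g (∑ j, bb j * Lx j) 0 :=
        HasDerivAt.fun_sum (u := Finset.univ) (fun j (_ : j ∈ Finset.univ) => hgj j)
      -- g has a local minimum at 0
      have hev : ∀ᶠ ε in nhds (0:ℝ), ∀ j, 0 ≤ x t j + ε * bb j := by
        rw [Filter.eventually_all]
        intro j
        have hcont : ContinuousAt (fun ε : ℝ => x t j + ε * bb j) 0 := by fun_prop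
        have h0 : (0:ℝ) < x t j + 0 * bb j := by simpa using hxp j
        exact (hcont.eventually (eventually_gt_nhds h0)).mono fun ε hε => hε.le
      have hlocmin : IsLocalMin g 0 := by
        refine hev.mono fun ε hε => ?_
        have hg0 : g 0 = KL (x t) yt := by
          rw [hg]
          show KL (fun j => x t j + 0 * bb j) yt = KL (x t) yt
          congr 1
          funext j
          ring
        rw [hg0]
        have hgε : g ε = KL (fun j => x t j + ε * bb j) yt := by rw [hg]
        rw [hgε]
        apply hmin
        refine ⟨hε, ?_⟩
        intro i
        have : ∑ j, (𝒮 i j : ℝ) * (x t j + ε * bb j)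
            = (∑ j, (𝒮 i j : ℝ) * x t j) + ε * ∑ j, (𝒮 i j : ℝ) * bb j := by
          rw [Finset.mul_sum, ← Finset.sum_add_distrib]
          exact Finset.sum_congr rfl fun j _ => by ring
        rw [this, hbb, hbkR0 i l, mul_zero, add_zero]
        exact hsx i
      have hzero : ∑ j, bb j * Lx j = 0 := hlocmin.hasDerivAt_eq_zero hgd
      have hlog : Real.log (Fp l) = Real.log (Fm l) := by
        have := keylog l
        rw [hbb] at hzero
        rw [hzero] at this
        linarith
      rw [← Real.exp_log (hFpp l), ← Real.exp_log (hFmp l), hlog]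
    · intro i
      rw [hθd]
      simpa [hyt] using hθ0 i
end

section
/- (EM scheme, stationarity of the limit.) In the setting of the EM scheme: let A = (a_{ij}) be an m×n matrix of nonnegative integers, c ∈ ℝ^n_{>0}, y_A(θ)_j := c_j Π_{i=1}^m θ_i^{a_{ij}}; let 𝒮 be an integer matrix with n columns, {b_1,…,b_r} a ℤ-basis of (ker 𝒮) ∩ ℤ^n; let k_l⁺, k_l⁻ > 0 and d_l, e_l ∈ ℤ^m_{≥0} satisfy (k_l⁻/k_l⁺)·θ^{e_l − d_l} = y_A(θ)^{b_l} for all θ ∈ ℝ^m_{>0}; and let (x, θ) : [0,∞) → ℝ^n_{>0} × ℝ^m_{>0} be differentiable with ẋ(t) = Σ_l b_l ( k_l⁻ θ(t)^{e_l} x(t)^{b_l⁻} − k_l⁺ θ(t)^{d_l} x(t)^{b_l⁺} ) and θ̇(t) = A(x(t) − y_A(θ(t))). Suppose the limit (x̂, θ̂) := lim_{t→∞} (x(t), θ(t)) exists with x̂ ∈ ℝ^n_{>0} and θ̂ ∈ ℝ^m_{>0}. Then (i) the gradient of θ ↦ D(x̂‖y_A(θ)) vanishes at θ̂, and (ii)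 the vector log x̂ − log y_A(θ̂) ∈ ℝ^n is orthogonal to the real span of {b_1,…,b_r}. -/
open Filter Topology Finset

/-- If `g` converges at infinity and its derivative `h` converges, the limit of `h` is `0`. -/
lemma deriv_limit_zero {g h : ℝ → ℝ} {L v : ℝ}
    (hg : ∀ t, 0 ≤ t → HasDerivAt g (h t) t)
    (hgl : Tendsto g atTop (nhds L))
    (hhl : Tendsto h atTop (nhds v)) : v = 0 := by
  have key : ∀ t : ℝ, 0 ≤ t → ∃ ξ, t < ξ ∧ ξ < t + 1 ∧ h ξ = g (t + 1) - g t := by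
    intro t ht
    have hlt : t < t + 1 := by linarith
    have hcont : ContinuousOn g (Set.Icc t (t + 1)) := by
      intro s hs
      exact ((hg s (le_trans ht hs.1)).continuousAt).continuousWithinAt
    have hder : ∀ s ∈ Set.Ioo t (t + 1), HasDerivAt g (h s) s := fun s hs =>
      hg s (le_trans ht hs.1.le)
    obtain ⟨ξ, hξ, hval⟩ := exists_hasDerivAt_eq_slope g h hlt hcont hder
    exact ⟨ξ, hξ.1, hξ.2, by rw [hval]; field_simp; ring⟩
  classical
  set φ : ℝ → ℝ := fun t => if ht : 0 ≤ t then (key t ht).choose else 0 with hφ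
  have hφ1 : ∀ t : ℝ, 0 ≤ t → t < φ t := by
    intro t ht; simp only [hφ, dif_pos ht]; exact (key t ht).choose_spec.1
  have hφ2 : ∀ t : ℝ, 0 ≤ t → h (φ t) = g (t + 1) - g t := by
    intro t ht; simp only [hφ, dif_pos ht]; exact (key t ht).choose_spec.2.2
  have hφtop : Tendsto φ atTop atTop :=
    tendsto_atTop_mono' _ (by filter_upwards [eventually_ge_atTop (0:ℝ)] with t ht
      using (hφ1 t ht).le) tendsto_id
  have h1 : Tendsto (fun t => h (φ t)) atTop (nhds v) := hhl.comp hφtop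
  have h2 : Tendsto (fun t => h (φ t)) atTop (nhds 0) := by
    have : Tendsto (fun t => g (t + 1) - g t) atTop (nhds (L - L)) :=
      (hgl.comp (tendsto_atTop_add_const_right _ 1 tendsto_id)).sub hgl
    rw [sub_self] at this
    exact this.congr' (by filter_upwards [eventually_ge_atTop (0:ℝ)] with t ht
      using (hφ2 t ht).symm)
  exact tendsto_nhds_unique h1 h2

lemma zpow_eq_exp {a : ℝ} (ha : 0 < a) (z : ℤ) :
    a ^ z = Real.exp (z * Real.log a) := by
  rw [← Real.rpow_intCast, Real.rpow_def_of_pos ha, mul_comm]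

/-- EM scheme, stationarity of the limit: if the trajectory
`(x(t), θ(t))` of the EM dynamics converges to a strictly positive limit
`(x̂, θ̂)`, then (i) the gradient of `θ ↦ D(x̂‖y_A(θ))` vanishes at `θ̂`, and
(ii) `log x̂ − log y_A(θ̂)` is orthogonal to the real span of `{b_1,…,b_r}`. -/
theorem em_scheme_limit_stationary
    {m n p r : ℕ} (A : Matrix (Fin m) (Fin n) ℕ) (c : Fin n → ℝ)
    (hc : ∀ j, 0 < c j)
    (𝒮 : Matrix (Fin p) (Fin n) ℤ)
    (b : Fin r → Fin n → ℤ)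
    -- `b` is a ℤ-basis of the lattice `(ker 𝒮) ∩ ℤ^n`:
    (hbker : ∀ l, ∀ i, ∑ j, 𝒮 i j * b l j = 0)
    (hbspan : ∀ v : Fin n → ℤ, (∀ i, ∑ j, 𝒮 i j * v j = 0) →
      ∃ mm : Fin r → ℤ, v = ∑ l, mm l • b l)
    (hbindep : LinearIndependent ℤ b)
    (kp km : Fin r → ℝ) (hkp : ∀ l, 0 < kp l) (hkm : ∀ l, 0 < km l)
    (d e : Fin r → Fin m → ℕ)
    (hrates : ∀ θ' : Fin m → ℝ, (∀ i, 0 < θ' i) → ∀ l,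
      km l / kp l * ∏ i, θ' i ^ ((e l i : ℤ) - (d l i : ℤ)) =
        ∏ j, (yA A c θ' j) ^ (b l j))
    (x : ℝ → Fin n → ℝ) (θ : ℝ → Fin m → ℝ)
    (hxpos : ∀ t, 0 ≤ t → ∀ j, 0 < x t j)
    (hθpos : ∀ t, 0 ≤ t → ∀ i, 0 < θ t i)
    (hxode : ∀ t, 0 ≤ t → HasDerivAt x
      (∑ l, (km l * (∏ i, θ t i ^ e l i) * (∏ j, x t j ^ (-(b l j)).toNat)
            - kp l * (∏ i, θ t i ^ d l i) * (∏ j, x t j ^ (b l j).toNat)) •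
        (fun j => (b l j : ℝ))) t)
    (hθode : ∀ t, 0 ≤ t → HasDerivAt θ
      (fun i => ∑ j, (A i j : ℝ) * (x t j - yA A c (θ t) j)) t)
    (xhat : Fin n → ℝ) (θhat : Fin m → ℝ)
    (hxhat : ∀ j, 0 < xhat j) (hθhat : ∀ i, 0 < θhat i)
    (hlim : Filter.Tendsto (fun t => (x t, θ t)) Filter.atTop (nhds (xhat, θhat))) :
    HasFDerivAt (fun θ' : Fin m → ℝ => KL xhat (yA A c θ'))
        (0 : (Fin m → ℝ) →L[ℝ] ℝ) θhat ∧
    ∀ v : Fin n → ℝ,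
      v ∈ Submodule.span ℝ (Set.range fun l => fun j => (b l j : ℝ)) →
      ∑ j, (Real.log (xhat j) - Real.log (yA A c θhat j)) * v j = 0 := by
  classical
  -- coordinate limits
  have hxlim0 : Tendsto x atTop (nhds xhat) :=
    (continuous_fst.tendsto _).comp hlim
  have hθlim0 : Tendsto θ atTop (nhds θhat) :=
    (continuous_snd.tendsto _).comp hlim
  have hxlim : ∀ j, Tendsto (fun t => x t j) atTop (nhds (xhat j)) :=
    fun j => tendsto_pi_nhds.mp hxlim0 j
  have hθlim : ∀ i, Tendsto (fun t => θ t i) atTop (nhds (θhat i)) :=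
    fun i => tendsto_pi_nhds.mp hθlim0 i
  -- E1 : stationarity of θ
  have E1 : ∀ i, ∑ j, (A i j : ℝ) * (xhat j - yA A c θhat j) = 0 := by
    intro i
    refine deriv_limit_zero (g := fun t => θ t i)
      (h := fun t => ∑ j, (A i j : ℝ) * (x t j - yA A c (θ t) j))
      (L := θhat i) ?_ (hθlim i) ?_
    · intro t ht
      exact hasDerivAt_pi.mp (hθode t ht) i
    · refine tendsto_finset_sum _ fun j _ => ?_
      refine tendsto_const_nhds.mul ((hxlim j).sub ?_)
      simp only [yA]
      exact tendsto_const_nhds.mul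
        (tendsto_finset_prod _ fun i' _ => (hθlim i').pow _)
  -- E2 : stationarity of x
  have E2 : ∀ j, ∑ l,
      (km l * (∏ i, θhat i ^ e l i) * (∏ j', xhat j' ^ (-(b l j')).toNat)
        - kp l * (∏ i, θhat i ^ d l i) * (∏ j', xhat j' ^ (b l j').toNat))
        * (b l j : ℝ) = 0 := by
    intro j
    refine deriv_limit_zero (g := fun t => x t j)
      (h := fun t => ∑ l,
        (km l * (∏ i, θ t i ^ e l i) * (∏ j', x t j' ^ (-(b l j')).toNat)
          - kp l * (∏ i, θ t i ^ d l i) * (∏ j', x t j' ^ (b l j').toNat))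
          * (b l j : ℝ))
      (L := xhat j) ?_ (hxlim j) ?_
    · intro t ht
      have := hasDerivAt_pi.mp (hxode t ht) j
      simpa [Finset.sum_apply, Pi.smul_apply, smul_eq_mul] using this
    · refine tendsto_finset_sum _ fun l _ => ?_
      refine Tendsto.mul_const _ (Tendsto.sub ?_ ?_)
      · exact (tendsto_const_nhds.mul
          (tendsto_finset_prod _ fun i _ => (hθlim i).pow _)).mul
          (tendsto_finset_prod _ fun j' _ => (hxlim j').pow _)
      · exact (tendsto_const_nhds.mul
          (tendsto_finset_prod _ fun i _ => (hθlim i).pow _)).mul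
          (tendsto_finset_prod _ fun j' _ => (hxlim j').pow _)
  refine ⟨?_, ?_⟩
  · -- Part (i): the gradient of the KL divergence vanishes at the limit
    have hy : ∀ j, 0 < yA A c θhat j := fun j =>
      mul_pos (hc j) (prod_pos fun i _ => pow_pos (hθhat i) _)
    -- derivative of each yA coordinate
    set Dy : Fin n → ((Fin m → ℝ) →L[ℝ] ℝ) := fun j =>
      c j • ∑ i, (∏ i' ∈ Finset.univ.erase i, θhat i' ^ A i' j) •
        (((A i j : ℝ) * θhat i ^ (A i j - 1)) •
          (ContinuousLinearMap.proj i : (Fin m → ℝ) →L[ℝ] ℝ)) with hDy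
    have hY : ∀ j, HasFDerivAt (fun θ' : Fin m → ℝ => yA A c θ' j) (Dy j) θhat := by
      intro j
      have h1 : ∀ i ∈ Finset.univ, HasFDerivAt (fun θ' : Fin m → ℝ => θ' i ^ A i j)
          (((A i j : ℝ) * θhat i ^ (A i j - 1)) •
            (ContinuousLinearMap.proj i : (Fin m → ℝ) →L[ℝ] ℝ)) θhat := by
        intro i _
        exact (hasDerivAt_pow (A i j) (θhat i)).comp_hasFDerivAt θhat
          ((ContinuousLinearMap.proj i : (Fin m → ℝ) →L[ℝ] ℝ).hasFDerivAt (x := θhat))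
      have h2 := HasFDerivAt.finset_prod h1
      exact h2.const_mul (c j)
    -- derivative of each summand of KL
    set L : Fin n → ((Fin m → ℝ) →L[ℝ] ℝ) := fun j =>
      ((1 : ℝ) - xhat j / yA A c θhat j) • Dy j with hL
    have hFj : ∀ j, HasFDerivAt (fun θ' : Fin m → ℝ =>
        xhat j * Real.log (xhat j / yA A c θ' j) - xhat j + yA A c θ' j) (L j) θhat := by
      intro j
      have hlog : HasFDerivAt (fun θ' : Fin m → ℝ => Real.log (yA A c θ' j))
          ((yA A c θhat j)⁻¹ • Dy j) θhat :=
        (hY j).log (hy j).ne'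
      have hg : HasFDerivAt (fun θ' : Fin m → ℝ =>
          xhat j * Real.log (xhat j) - xhat j * Real.log (yA A c θ' j) - xhat j + yA A c θ' j)
          (L j) θhat := by
        have h5 := (((hasFDerivAt_const (xhat j * Real.log (xhat j)) θhat).sub
          (hlog.const_mul (xhat j))).sub (hasFDerivAt_const (xhat j) θhat)).add (hY j)
        refine h5.congr_fderiv ?_
        ext v
        simp only [hL, ContinuousLinearMap.smul_apply, ContinuousLinearMap.add_apply,
          ContinuousLinearMap.sub_apply, ContinuousLinearMap.zero_apply, smul_eq_mul]
        ring
      refine hg.congr_of_eventuallyEq ?_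
      have hev : ∀ᶠ θ' in nhds θhat, 0 < yA A c θ' j :=
        (hY j).continuousAt.eventually_mem (Ioi_mem_nhds (hy j)) |>.mono (fun θ' h => h)
      filter_upwards [hev] with θ' hθ'
      rw [Real.log_div (hxhat j).ne' hθ'.ne']
      ring
    have hsum : HasFDerivAt (fun θ' : Fin m → ℝ => KL xhat (yA A c θ')) (∑ j, L j) θhat := by
      have h := HasFDerivAt.sum (fun j (_ : j ∈ Finset.univ) => hFj j)
      exact h.congr_of_eventuallyEq (Filter.Eventually.of_forall fun θ' => by simp [KL])
    have hzero : (∑ j, L j) = 0 := by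
      apply ContinuousLinearMap.ext
      intro v
      simp only [ContinuousLinearMap.sum_apply, hL, hDy, ContinuousLinearMap.smul_apply,
        ContinuousLinearMap.proj_apply, ContinuousLinearMap.zero_apply, smul_eq_mul]
      have hterm : ∀ j, ((1 : ℝ) - xhat j / yA A c θhat j) *
          (c j * ∑ i, (∏ i' ∈ Finset.univ.erase i, θhat i' ^ A i' j) *
            (((A i j : ℝ) * θhat i ^ (A i j - 1)) * v i)) =
          ∑ i, (A i j : ℝ) * (yA A c θhat j - xhat j) * (v i / θhat i) := by
        intro j
        have hinner : ∀ i, (∏ i' ∈ Finset.univ.erase i, θhat i' ^ A i' j) *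
            (((A i j : ℝ) * θhat i ^ (A i j - 1)) * v i) =
            (∏ i', θhat i' ^ A i' j) * ((A i j : ℝ) * (v i / θhat i)) := by
          intro i
          rcases Nat.eq_zero_or_pos (A i j) with h0 | hpos
          · simp [h0]
          · have hprod : (∏ i' ∈ Finset.univ.erase i, θhat i' ^ A i' j) * θhat i ^ A i j
                = ∏ i', θhat i' ^ A i' j :=
              Finset.prod_erase_mul _ _ (Finset.mem_univ i)
            have hpow : θhat i ^ A i j = θhat i ^ (A i j - 1) * θhat i := by
              conv_lhs => rw [show A i j = (A i j - 1) + 1 from (Nat.succ_pred_eq_of_pos hpos).symm]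
              rw [pow_succ]
            rw [← hprod, hpow]
            have hθ : θhat i ≠ 0 := (hθhat i).ne'
            field_simp
        rw [Finset.sum_congr rfl fun i _ => hinner i]
        rw [← Finset.mul_sum, Finset.mul_sum, Finset.mul_sum, Finset.mul_sum]
        refine Finset.sum_congr rfl fun i _ => ?_
        have hθi : θhat i ≠ 0 := (hθhat i).ne'
        have hcj : c j ≠ 0 := (hc j).ne'
        have hprodne : (∏ i', θhat i' ^ A i' j) ≠ 0 :=
          (prod_pos fun i'' _ => pow_pos (hθhat i'') _).ne'
        rw [show yA A c θhat j = c j * ∏ i', θhat i' ^ A i' j from rfl]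
        field_simp
      rw [Finset.sum_congr rfl fun j _ => hterm j, Finset.sum_comm]
      refine Finset.sum_eq_zero fun i _ => ?_
      have h6 : ∑ j, (A i j : ℝ) * (yA A c θhat j - xhat j) = 0 := by
        have := E1 i
        have h7 : ∑ j, (A i j : ℝ) * (yA A c θhat j - xhat j)
            = -∑ j, (A i j : ℝ) * (xhat j - yA A c θhat j) := by
          rw [← Finset.sum_neg_distrib]
          exact Finset.sum_congr rfl fun j _ => by ring
        rw [h7, this, neg_zero]
      calc ∑ j, (A i j : ℝ) * (yA A c θhat j - xhat j) * (v i / θhat i)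
          = (∑ j, (A i j : ℝ) * (yA A c θhat j - xhat j)) * (v i / θhat i) := by
            rw [Finset.sum_mul]
        _ = 0 := by rw [h6, zero_mul]
    rw [← hzero]
    exact hsum
  · -- Part (ii): orthogonality to the span of the b_l
    have hy : ∀ j, 0 < yA A c θhat j := fun j =>
      mul_pos (hc j) (prod_pos fun i _ => pow_pos (hθhat i) _)
    set w : Fin n → ℝ := fun j => Real.log (xhat j) - Real.log (yA A c θhat j) with hw
    set s : Fin r → ℝ := fun l => ∑ j, w j * b l j with hs
    set P : Fin r → ℝ := fun l =>
      kp l * (∏ i, θhat i ^ d l i) * (∏ j, xhat j ^ (b l j).toNat) with hP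
    set R : Fin r → ℝ := fun l =>
      km l * (∏ i, θhat i ^ e l i) * (∏ j, xhat j ^ (-(b l j)).toNat) - P l with hR
    have hPpos : ∀ l, 0 < P l := fun l =>
      mul_pos (mul_pos (hkp l) (prod_pos fun i _ => pow_pos (hθhat i) _))
        (prod_pos fun j _ => pow_pos (hxhat j) _)
    -- key identity: R l = P l * (exp (-(s l)) - 1)
    have hRid : ∀ l, R l = P l * (Real.exp (-(s l)) - 1) := by
      intro l
      have h1 : km l * (∏ i, θhat i ^ e l i) =
          kp l * (∏ i, θhat i ^ d l i) * ∏ j, (yA A c θhat j) ^ (b l j) := by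
        have h0 := hrates θhat hθhat l
        have hprod : (∏ i, θhat i ^ ((e l i : ℤ) - (d l i : ℤ)))
            = (∏ i, θhat i ^ e l i) / (∏ i, θhat i ^ d l i) := by
          rw [← Finset.prod_div_distrib]
          refine Finset.prod_congr rfl fun i _ => ?_
          rw [zpow_sub₀ (hθhat i).ne', zpow_natCast, zpow_natCast]
        rw [hprod] at h0
        have hdpos : (0:ℝ) < ∏ i, θhat i ^ d l i := prod_pos fun i _ => pow_pos (hθhat i) _
        have hkpne : kp l ≠ 0 := (hkp l).ne'
        have hdne : (∏ i, θhat i ^ d l i) ≠ 0 := hdpos.ne'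
        field_simp at h0
        rw [h0, mul_comm]
      have h2 : (∏ j, xhat j ^ (-(b l j)).toNat)
          = (∏ j, xhat j ^ (b l j).toNat) * ∏ j, (xhat j) ^ (-(b l j)) := by
        rw [← Finset.prod_mul_distrib]
        refine Finset.prod_congr rfl fun j _ => ?_
        have hz : (((-(b l j)).toNat : ℤ)) = ((b l j).toNat : ℤ) + (-(b l j)) := by omega
        calc xhat j ^ (-(b l j)).toNat = xhat j ^ (((-(b l j)).toNat : ℤ)) :=
              (zpow_natCast _ _).symm
          _ = xhat j ^ (((b l j).toNat : ℤ)) * xhat j ^ (-(b l j)) := by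
              rw [hz, zpow_add₀ (hxhat j).ne']
          _ = xhat j ^ (b l j).toNat * xhat j ^ (-(b l j)) := by rw [zpow_natCast]
      have h3 : (∏ j, (yA A c θhat j) ^ (b l j)) * ∏ j, (xhat j) ^ (-(b l j))
          = Real.exp (-(s l)) := by
        rw [← Finset.prod_mul_distrib]
        have : ∀ j, (yA A c θhat j) ^ (b l j) * (xhat j) ^ (-(b l j))
            = Real.exp ((b l j : ℝ) * Real.log (yA A c θhat j)
                - (b l j : ℝ) * Real.log (xhat j)) := by
          intro j
          rw [zpow_eq_exp (hy j), zpow_eq_exp (hxhat j), ← Real.exp_add]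
          push_cast
          ring_nf
        rw [Finset.prod_congr rfl fun j _ => this j, ← Real.exp_sum]
        congr 1
        rw [hs]
        simp only [hw]
        rw [← Finset.sum_neg_distrib]
        exact Finset.sum_congr rfl fun j _ => by ring
      simp only [hR, hP]
      rw [h1, h2, mul_sub, mul_one, ← h3]
      ring
    -- sum of R l * s l is zero
    have hsum : ∑ l, R l * s l = 0 := by
      have key : ∀ j, ∑ l, R l * (b l j : ℝ) = 0 := by
        intro j
        simpa only [hR, hP] using E2 j
      calc ∑ l, R l * s l = ∑ l, ∑ j, R l * (w j * (b l j : ℝ)) := by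
            simp only [hs, Finset.mul_sum]
        _ = ∑ j, ∑ l, R l * (w j * (b l j : ℝ)) := Finset.sum_comm
        _ = ∑ j, w j * ∑ l, R l * (b l j : ℝ) := by
            refine Finset.sum_congr rfl fun j _ => ?_
            rw [Finset.mul_sum]
            exact Finset.sum_congr rfl fun l _ => by ring
        _ = 0 := by
            refine Finset.sum_eq_zero fun j _ => ?_
            rw [key j, mul_zero]
    have hterm : ∀ l, R l * s l ≤ 0 := by
      intro l
      rw [hRid l]
      rcases le_or_gt 0 (s l) with hsl | hsl
      · have h4 : Real.exp (-(s l)) - 1 ≤ 0 := by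
          have : Real.exp (-(s l)) ≤ 1 := Real.exp_le_one_iff.mpr (by linarith)
          linarith
        exact mul_nonpos_of_nonpos_of_nonneg
          (mul_nonpos_of_nonneg_of_nonpos (hPpos l).le h4) hsl
      · have h4 : 1 < Real.exp (-(s l)) := by
          linarith [Real.add_one_le_exp (-(s l))]
        exact (mul_neg_of_pos_of_neg
          (mul_pos (hPpos l) (by linarith)) hsl).le
    have heach : ∀ l, R l * s l = 0 := by
      intro l
      have := (Finset.sum_eq_zero_iff_of_nonpos (fun l _ => hterm l)).mp hsum l (mem_univ l)
      exact this
    have hs0 : ∀ l, s l = 0 := by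
      intro l
      by_contra hne
      have h0 := heach l
      rw [hRid l] at h0
      rcases lt_trichotomy (s l) 0 with hsl | hsl | hsl
      · have h4 : 1 < Real.exp (-(s l)) := by
          linarith [Real.add_one_le_exp (-(s l))]
        exact absurd h0 (ne_of_lt (mul_neg_of_pos_of_neg
          (mul_pos (hPpos l) (by linarith)) hsl))
      · exact hne hsl
      · have h4 : Real.exp (-(s l)) < 1 := by
          have h5 : 1 < Real.exp (s l) := by linarith [Real.add_one_le_exp (s l)]
          rw [Real.exp_neg]
          exact inv_lt_one_of_one_lt₀ h5
        exact absurd h0 (ne_of_gt (neg_pos.mp (by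
          have := mul_neg_of_neg_of_pos
            (mul_neg_of_pos_of_neg (hPpos l) (by linarith : Real.exp (-(s l)) - 1 < 0)) hsl
          linarith))).symm
    -- conclude by span induction
    intro v hv
    refine Submodule.span_induction ?_ ?_ ?_ ?_ hv
    · rintro _ ⟨l, rfl⟩
      exact hs0 l
    · simp
    · intro u u' _ _ hu hu'
      simp only [Pi.add_apply, mul_add, Finset.sum_add_distrib]
      rw [hu, hu', add_zero]
    · intro a u _ hu
      simp only [Pi.smul_apply, smul_eq_mul]
      rw [show (∑ j, w j * (a * u j)) = a * ∑ j, w j * u j by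
        rw [Finset.mul_sum]; exact Finset.sum_congr rfl fun j _ => by ring]
      rw [hu, mul_zero]
end
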